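/- arXiv:1202.2977 — 6 statements merged into one kernel-verified Lean document; each statement's English description precedes it below -/
import Mathlib

section
/- If T_OP(X, X') and T_OP(Y, Y') are isomorphic as semigroups, then X' and Y' are either order-isomorphic or order-anti-isomorphic (as chains with the induced order). -/
open Set Function

/-- The semigroup of order-preserving self-maps of `X` with range contained in `X'`. -/
def OPR {X : Type*} [LinearOrder X] (X' : Set X) : Set (X → X) :=
  {f | Monotone f ∧ Set.range f ⊆ X'}

/-- `φ` is a semigroup isomorphism from `T_OP(X, X')` onto `T_OP(Y, Y')`
(composition written left-to-right: `f * g = g ∘ f`). -/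
def IsSgIso {X Y : Type*} [LinearOrder X] [LinearOrder Y] (X' : Set X) (Y' : Set Y)
    (φ : (X → X) → (Y → Y)) : Prop :=
  Set.BijOn φ (OPR X') (OPR Y') ∧
    ∀ f ∈ OPR X', ∀ g ∈ OPR X', φ (g ∘ f) = φ g ∘ φ f

lemma const_mem_OPR {X : Type*} [LinearOrder X] {X' : Set X} {a : X} (ha : a ∈ X') :
    (fun _ => a) ∈ OPR X' :=
  ⟨monotone_const, by rintro y ⟨x, rfl⟩; exact ha⟩

/-- Betweenness is algebraically definable in `OPR X'`. -/
lemma OPR_btw_iff {X : Type*} [LinearOrder X] {X' : Set X} {a b c : X}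
    (ha : a ∈ X') (hb : b ∈ X') (hc : c ∈ X') :
    ((a ≤ b ∧ b ≤ c) ∨ (c ≤ b ∧ b ≤ a)) ↔
      ∀ f ∈ OPR X', f a = f c → f b = f a := by
  constructor
  · rintro (⟨h1, h2⟩ | ⟨h1, h2⟩) f ⟨hmono, _⟩ hac
    · exact le_antisymm (by rw [hac]; exact hmono h2) (hmono h1)
    · exact le_antisymm (hmono h2) (by rw [hac]; exact hmono h1)
  · intro h
    by_contra hbtw
    push_neg at hbtw
    obtain ⟨h1, h2⟩ := hbtw
    have hcases : (max a c < b) ∨ (b < min a c) := by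
      rcases le_total a b with hab | hab
      · have hcb : c < b := h1 hab
        have hab' : a < b := h2 hcb.le
        exact Or.inl (max_lt hab' hcb)
      · have hbc : b < c := lt_of_not_ge fun hcb => absurd (h2 hcb) (not_lt.2 hab)
        have hba : b < a := lt_of_not_ge fun h' => absurd (h1 h') (not_lt.2 hbc.le)
        exact Or.inr (lt_min hba hbc)
    rcases hcases with hM | hm
    · set M := max a c with hMdef
      have hMmem : M ∈ X' := by
        rcases max_choice a c with h' | h' <;> rw [hMdef, h'] <;> assumption
      have hfmem : (fun x => if x ≤ M then M else b) ∈ OPR X' := by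
        constructor
        · intro u v huv
          by_cases hu : u ≤ M
          · simp only [if_pos hu]
            split_ifs with hv
            · exact le_rfl
            · exact hM.le
          · have hv : ¬ v ≤ M := fun hv => hu (huv.trans hv)
            simp only [if_neg hu, if_neg hv, le_refl]
        · rintro y ⟨x, rfl⟩
          by_cases hx : x ≤ M
          · simpa [if_pos hx] using hMmem
          · simpa [if_neg hx] using hb
      have h3 := h _ hfmem (by
        simp only [if_pos (show a ≤ M from le_max_left a c), if_pos (show c ≤ M from le_max_right a c)])
      simp only [if_neg (not_le.2 hM), if_pos (show a ≤ M from le_max_left a c)] at h3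
      exact hM.ne' h3
    · set m := min a c with hmdef
      have hmmem : m ∈ X' := by
        rcases min_choice a c with h' | h' <;> rw [hmdef, h'] <;> assumption
      have hfmem : (fun x => if x < m then b else m) ∈ OPR X' := by
        constructor
        · intro u v huv
          by_cases hv : v < m
          · have hu : u < m := lt_of_le_of_lt huv hv
            simp only [if_pos hu, if_pos hv, le_refl]
          · simp only [if_neg hv]
            split_ifs with hu
            · exact hm.le
            · exact le_rfl
        · rintro y ⟨x, rfl⟩
          by_cases hx : x < m
          · simpa [if_pos hx] using hb
          · simpa [if_neg hx] using hmmem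
      have h3 := h _ hfmem (by
        simp only [if_neg (not_lt.2 (show m ≤ a from min_le_left a c)), if_neg (not_lt.2 (show m ≤ c from min_le_right a c))])
      simp only [if_pos hm, if_neg (not_lt.2 (show m ≤ a from min_le_left a c))] at h3
      exact hm.ne h3
    
/-- A map whose values on consecutive triples are ordered consistently has a constant
"direction" on all pairs. -/
lemma sign_lemma {α β : Type*} [LinearOrder α] [LinearOrder β] (Θ : α → β)
    (htriple : ∀ u v w : α, u < v → v < w →
      (Θ u < Θ v ∧ Θ v < Θ w) ∨ (Θ w < Θ v ∧ Θ v < Θ u)) :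
    ∀ x y u v : α, x < y → u < v → (Θ x < Θ y ↔ Θ u < Θ v) := by
  have h1 : ∀ m x y : α, m ≤ x → x < y → (Θ x < Θ y ↔ Θ m < Θ y) := by
    intro m x y hmx hxy
    rcases eq_or_lt_of_le hmx with rfl | hmx
    · exact Iff.rfl
    · rcases htriple m x y hmx hxy with ⟨ha, hb⟩ | ⟨ha, hb⟩
      · exact iff_of_true hb (ha.trans hb)
      · exact iff_of_false (not_lt.2 ha.le) (not_lt.2 (ha.trans hb).le)
  have h2 : ∀ m y M : α, m < y → y ≤ M → (Θ m < Θ y ↔ Θ m < Θ M) := by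
    intro m y M hmy hyM
    rcases eq_or_lt_of_le hyM with rfl | hyM
    · exact Iff.rfl
    · rcases htriple m y M hmy hyM with ⟨ha, hb⟩ | ⟨ha, hb⟩
      · exact iff_of_true ha (ha.trans hb)
      · exact iff_of_false (not_lt.2 hb.le) (not_lt.2 (ha.trans hb).le)
  intro x y u v hxy huv
  have key : ∀ p q : α, p < q → min x u ≤ p → q ≤ max y v →
      (Θ p < Θ q ↔ Θ (min x u) < Θ (max y v)) := by
    intro p q hpq hmp hqM
    rw [h1 _ _ _ hmp hpq]
    exact h2 _ _ _ (lt_of_le_of_lt hmp hpq) hqM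
  rw [key x y hxy (min_le_left _ _) (le_max_left _ _),
      key u v huv (min_le_right _ _) (le_max_right _ _)]

/-- if `T_OP(X, X') ≅ T_OP(Y, Y')`, then `X'` and `Y'` are order-isomorphic
or order-anti-isomorphic. -/
theorem stmt_3 {X Y : Type*} [LinearOrder X] [LinearOrder Y] (X' : Set X) (Y' : Set Y)
    (hX' : X'.Nontrivial) (hY' : Y'.Nontrivial)
    (φ : (X → X) → (Y → Y)) (hφ : IsSgIso X' Y' φ) :
    Nonempty (X' ≃o Y') ∨ Nonempty (X' ≃o (↥Y')ᵒᵈ) := by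
  classical
  obtain ⟨hbij, hmul⟩ := hφ
  obtain ⟨y0, hy0, y1, hy1, hy01⟩ := hY'
  obtain ⟨x0, hx0, x1, hx1, hx01⟩ := hX'
  set θ : X → Y := fun a => φ (fun _ => a) y0 with hθdef
  -- φ maps constants to constants
  have hconst : ∀ a ∈ X', φ (fun _ => a) = (fun _ => θ a) := by
    intro a ha
    obtain ⟨g, hg, hgeq⟩ := hbij.surjOn (const_mem_OPR hy0)
    have h2 : φ ((fun _ => a) ∘ g) = φ (fun _ => a) ∘ φ g :=
      hmul g hg (fun _ => a) (const_mem_OPR ha)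
    have h1 : ((fun _ => a) ∘ g : X → X) = fun _ => a := rfl
    rw [h1, hgeq] at h2
    funext y
    have := congrFun h2 y
    simp only [Function.comp_apply] at this
    rw [hθdef]
    exact this
  have hmem : ∀ a ∈ X', θ a ∈ Y' := by
    intro a ha
    have := (hbij.mapsTo (const_mem_OPR ha)).2
    exact this ⟨y0, rfl⟩
  have hinj : ∀ a ∈ X', ∀ b ∈ X', θ a = θ b → a = b := by
    intro a ha b hb hab
    have h1 : φ (fun _ => a) = φ (fun _ => b) := by
      rw [hconst a ha, hconst b hb, hab]
    have := hbij.injOn (const_mem_OPR ha) (const_mem_OPR hb) h1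
    exact congrFun this x0
  have hsurj : ∀ b ∈ Y', ∃ a ∈ X', θ a = b := by
    intro b hb
    obtain ⟨f, hf, hfeq⟩ := hbij.surjOn (const_mem_OPR hb)
    have hfx0 : f x0 ∈ X' := hf.2 ⟨x0, rfl⟩
    have hcomp : φ (f ∘ (fun _ => x0)) = φ f := by
      rw [hmul (fun _ => x0) (const_mem_OPR hx0) f hf, hfeq]
      rfl
    have hfc : (fun _ => f x0) = f := by
      have h1 : (f ∘ (fun _ => x0) : X → X) = fun _ => f x0 := rfl
      rw [h1] at hcomp
      exact hbij.injOn (const_mem_OPR hfx0) hf hcomp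
    refine ⟨f x0, hfx0, ?_⟩
    have h2 : φ (fun _ => f x0) = fun _ => b := by rw [hfc, hfeq]
    rw [hconst _ hfx0] at h2
    exact congrFun h2 y0
  -- value transfer
  have hval : ∀ f ∈ OPR X', ∀ a ∈ X', θ (f a) = φ f (θ a) := by
    intro f hf a ha
    have hfa : f a ∈ X' := hf.2 ⟨a, rfl⟩
    have h2 : φ (f ∘ (fun _ => a)) = φ f ∘ φ (fun _ => a) :=
      hmul (fun _ => a) (const_mem_OPR ha) f hf
    have h1 : (f ∘ (fun _ => a) : X → X) = fun _ => f a := rfl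
    rw [h1, hconst _ hfa, hconst _ ha] at h2
    exact congrFun h2 y0
  have hC : ∀ f ∈ OPR X', ∀ a ∈ X', ∀ c ∈ X',
      (f a = f c ↔ φ f (θ a) = φ f (θ c)) := by
    intro f hf a ha c hc
    rw [← hval f hf a ha, ← hval f hf c hc]
    constructor
    · intro h; rw [h]
    · intro h
      exact hinj _ (hf.2 ⟨a, rfl⟩) _ (hf.2 ⟨c, rfl⟩) h
  -- betweenness transfer
  have hBtw : ∀ a ∈ X', ∀ b ∈ X', ∀ c ∈ X',
      (((a : X) ≤ b ∧ b ≤ c) ∨ (c ≤ b ∧ b ≤ a)) ↔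
        ((θ a ≤ θ b ∧ θ b ≤ θ c) ∨ (θ c ≤ θ b ∧ θ b ≤ θ a)) := by
    intro a ha b hb c hc
    rw [OPR_btw_iff ha hb hc, OPR_btw_iff (hmem a ha) (hmem b hb) (hmem c hc)]
    constructor
    · intro h F hF hFac
      obtain ⟨f, hf, rfl⟩ := hbij.surjOn hF
      have := h f hf ((hC f hf a ha c hc).2 hFac)
      rw [← hval f hf a ha, ← hval f hf b hb]
      rw [this]
    · intro h f hf hac
      have hFm := hbij.mapsTo hf
      have := h (φ f) hFm ((hC f hf a ha c hc).1 hac)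
      rw [← hval f hf a ha, ← hval f hf b hb] at this
      exact hinj _ (hf.2 ⟨b, rfl⟩) _ (hf.2 ⟨a, rfl⟩) this
  -- package as a map of subtypes
  set Θ : ↥X' → ↥Y' := fun a => ⟨θ a, hmem a a.2⟩ with hΘdef
  have hΘinj : Function.Injective Θ := by
    intro u v huv
    exact Subtype.ext (hinj _ u.2 _ v.2 (congrArg Subtype.val huv))
  have hΘsurj : Function.Surjective Θ := by
    rintro ⟨b, hb⟩
    obtain ⟨a, ha, hab⟩ := hsurj b hb
    exact ⟨⟨a, ha⟩, Subtype.ext hab⟩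
  have htriple : ∀ u v w : ↥X', u < v → v < w →
      (Θ u < Θ v ∧ Θ v < Θ w) ∨ (Θ w < Θ v ∧ Θ v < Θ u) := by
    intro u v w huv hvw
    have hb := (hBtw u u.2 v v.2 w w.2).1
      (Or.inl ⟨le_of_lt (Subtype.coe_lt_coe.2 huv), le_of_lt (Subtype.coe_lt_coe.2 hvw)⟩)
    have huvne : θ u ≠ θ v := fun h =>
      (Subtype.coe_lt_coe.2 huv).ne (hinj _ u.2 _ v.2 h)
    have hvwne : θ v ≠ θ w := fun h =>
      (Subtype.coe_lt_coe.2 hvw).ne (hinj _ v.2 _ w.2 h)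
    rcases hb with ⟨ha, hb'⟩ | ⟨ha, hb'⟩
    · exact Or.inl ⟨Subtype.coe_lt_coe.1 (lt_of_le_of_ne ha huvne),
        Subtype.coe_lt_coe.1 (lt_of_le_of_ne hb' hvwne)⟩
    · exact Or.inr ⟨Subtype.coe_lt_coe.1 (lt_of_le_of_ne ha (Ne.symm hvwne)),
        Subtype.coe_lt_coe.1 (lt_of_le_of_ne hb' (Ne.symm huvne))⟩
  have hsign := sign_lemma Θ htriple
  -- a fixed pair
  have hAB : ∃ A B : ↥X', A < B := by
    rcases lt_or_gt_of_ne hx01 with h | h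
    · exact ⟨⟨x0, hx0⟩, ⟨x1, hx1⟩, Subtype.mk_lt_mk.2 h⟩
    · exact ⟨⟨x1, hx1⟩, ⟨x0, hx0⟩, Subtype.mk_lt_mk.2 h⟩
  obtain ⟨A, B, hABlt⟩ := hAB
  by_cases hdir : Θ A < Θ B
  · left
    have hmono : StrictMono Θ := fun u v h => (hsign u v A B h hABlt).2 hdir
    exact ⟨StrictMono.orderIsoOfSurjective Θ hmono hΘsurj⟩
  · right
    have hanti : StrictAnti Θ := by
      intro u v h
      have hne : Θ u ≠ Θ v := fun h' => h.ne (hΘinj h')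
      have : ¬ Θ u < Θ v := fun h' => hdir ((hsign u v A B h hABlt).1 h')
      exact lt_of_le_of_ne (not_lt.1 this) (Ne.symm hne)
    have hmono : StrictMono (fun x => OrderDual.toDual (Θ x) : ↥X' → (↥Y')ᵒᵈ) :=
      fun u v h => by exact (OrderDual.toDual_lt_toDual).2 (hanti h)
    have hsurjd : Function.Surjective (fun x => OrderDual.toDual (Θ x) : ↥X' → (↥Y')ᵒᵈ) :=
      fun b => (hΘsurj (OrderDual.ofDual b)).imp fun a ha => by simpa using congrArg OrderDual.toDual ha
    exact ⟨StrictMono.orderIsoOfSurjective _ hmono hsurjd⟩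
end

section
/- Let φ : T_OP(X, X') → T_OP(Y, Y') be a semigroup isomorphism with induced bijection θ_φ : X' → Y'. Then for every α ∈ T_OP(X, X'), θ_φ maps Fix(α) ∩ X' bijectively onto Fix(φ(α)) ∩ Y'; that is, for a ∈ X', aα = a if and only if ā(φ(α)) = ā. -/
open Set Function

/-- `θ_φ` maps `Fix(α) ∩ X'` bijectively onto `Fix(φ(α)) ∩ Y'`;
for `a ∈ X'`, `aα = a` iff `ā(φ(α)) = ā`. -/
theorem stmt_6 {X Y : Type*} [LinearOrder X] [LinearOrder Y] (X' : Set X) (Y' : Set Y)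
    (hX' : X'.Nontrivial) (hY' : Y'.Nontrivial)
    (φ : (X → X) → (Y → Y)) (hφ : IsSgIso X' Y' φ)
    (θ : X → Y) (hbij : Set.BijOn θ X' Y')
    (hθ : ∀ a ∈ X', φ (Function.const X a) = Function.const Y (θ a)) :
    ∀ α ∈ OPR X',
      (∀ a ∈ X', α a = a ↔ φ α (θ a) = θ a) ∧
      Set.BijOn θ ({x | α x = x} ∩ X') ({y | φ α y = y} ∩ Y') := by
  intro α hα
  obtain ⟨y₀, hy₀, -, -, -⟩ := hY'
  have hconst : ∀ a ∈ X', Function.const X a ∈ OPR X' := by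
    intro a ha
    exact ⟨monotone_const, by rintro x ⟨z, rfl⟩; exact ha⟩
  -- key equation: θ (α a) = φ α (θ a) for a ∈ X'
  have key : ∀ a ∈ X', θ (α a) = φ α (θ a) := by
    intro a ha
    have haa : α a ∈ X' := hα.2 ⟨a, rfl⟩
    have h1 : φ (α ∘ Function.const X a) = φ α ∘ φ (Function.const X a) :=
      hφ.2 _ (hconst a ha) _ hα
    have h2 : (α ∘ Function.const X a) = Function.const X (α a) := rfl
    rw [h2, hθ _ haa, hθ _ ha] at h1
    exact congrFun h1 y₀
  have iff_ : ∀ a ∈ X', α a = a ↔ φ α (θ a) = θ a := by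
    intro a ha
    constructor
    · intro h
      rw [← key a ha, h]
    · intro h
      have haa : α a ∈ X' := hα.2 ⟨a, rfl⟩
      exact hbij.injOn haa ha (by rw [key a ha, h])
  refine ⟨iff_, ?_, ?_, ?_⟩
  · rintro x ⟨hx, hx'⟩
    exact ⟨(iff_ x hx').1 hx, hbij.mapsTo hx'⟩
  · exact hbij.injOn.mono (inter_subset_right)
  · rintro y ⟨hy, hy'⟩
    obtain ⟨a, ha, rfl⟩ := hbij.surjOn hy'
    exact ⟨a, ⟨(iff_ a ha).2 hy, ha⟩, rfl⟩
end

section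
/- Let φ : T_OP(X, X') → T_OP(Y, Y') be a semigroup isomorphism with induced map θ_φ. Then for every α ∈ T_OP(X, X') (not just idempotents), θ_φ(ran α) = ran(φ(α)), and for every a ∈ ran α, ā(φ(α))⁻¹ ∩ Y' = θ_φ(aα⁻¹ ∩ X'). -/
open Set Function

/-- Step function with `≤` is in `OPR`. -/
lemma step_le_mem {Z : Type*} [LinearOrder Z] (Z' : Set Z) (p : Z) {q₁ q₂ : Z}
    (h₁ : q₁ ∈ Z') (h₂ : q₂ ∈ Z') (hq : q₁ ≤ q₂) :
    (fun w => if w ≤ p then q₁ else q₂) ∈ OPR Z' := by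
  constructor
  · intro u v huv
    dsimp only
    by_cases h2 : v ≤ p
    · rw [if_pos (huv.trans h2), if_pos h2]
    · rw [if_neg h2]
      split_ifs with h1
      exacts [hq, le_rfl]
  · rintro _ ⟨w, rfl⟩
    dsimp only
    split_ifs <;> assumption

/-- Step function with `<` is in `OPR`. -/
lemma step_lt_mem {Z : Type*} [LinearOrder Z] (Z' : Set Z) (p : Z) {q₁ q₂ : Z}
    (h₁ : q₁ ∈ Z') (h₂ : q₂ ∈ Z') (hq : q₁ ≤ q₂) :
    (fun w => if w < p then q₁ else q₂) ∈ OPR Z' := by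
  constructor
  · intro u v huv
    dsimp only
    by_cases h2 : v < p
    · rw [if_pos (huv.trans_lt h2), if_pos h2]
    · rw [if_neg h2]
      split_ifs with h1
      exacts [hq, le_rfl]
  · rintro _ ⟨w, rfl⟩
    dsimp only
    split_ifs <;> assumption

/-- Any nontrivial set in a linear order has a strictly ordered pair. -/
lemma exists_lt_pair {Z : Type*} [LinearOrder Z] {Z' : Set Z} (h : Z'.Nontrivial) :
    ∃ u ∈ Z', ∃ v ∈ Z', u < v := by
  obtain ⟨q₁, hq₁, q₂, hq₂, hqne⟩ := h
  rcases hqne.lt_or_gt with hlt | hlt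
  · exact ⟨q₁, hq₁, q₂, hq₂, hlt⟩
  · exact ⟨q₂, hq₂, q₁, hq₁, hlt⟩

/-- for every `α ∈ T_OP(X, X')`, `θ_φ(ran α) = ran(φ(α))` and for every
`a ∈ ran α`, `ā(φ(α))⁻¹ ∩ Y' = θ_φ(aα⁻¹ ∩ X')`. -/
theorem stmt_9 {X Y : Type*} [LinearOrder X] [LinearOrder Y] (X' : Set X) (Y' : Set Y)
    (hX' : X'.Nontrivial) (hY' : Y'.Nontrivial)
    (φ : (X → X) → (Y → Y)) (hφ : IsSgIso X' Y' φ)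
    (θ : X → Y) (hbij : Set.BijOn θ X' Y')
    (hθ : ∀ a ∈ X', φ (Function.const X a) = Function.const Y (θ a)) :
    ∀ α ∈ OPR X',
      θ '' Set.range α = Set.range (φ α) ∧
      ∀ a ∈ Set.range α, φ α ⁻¹' {θ a} ∩ Y' = θ '' (α ⁻¹' {a} ∩ X') := by
  obtain ⟨y₀, hy₀⟩ := hY'.nonempty
  -- membership of composites
  have compmem : ∀ g ∈ OPR X', ∀ α ∈ OPR X', (g ∘ α) ∈ OPR X' := by
    intro g hg α hα
    exact ⟨hg.1.comp hα.1, by rintro _ ⟨t, rfl⟩; exact hg.2 ⟨_, rfl⟩⟩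
  -- the key conjugation identity
  have key : ∀ g ∈ OPR X', ∀ a ∈ X', φ g (θ a) = θ (g a) := by
    intro g hg a ha
    have hconst : (Function.const X a) ∈ OPR X' :=
      ⟨monotone_const, by rintro _ ⟨t, rfl⟩; exact ha⟩
    have h1 : φ (g ∘ Function.const X a) = φ g ∘ φ (Function.const X a) :=
      hφ.2 _ hconst _ hg
    have h2 : g ∘ Function.const X a = Function.const X (g a) := rfl
    have hga : g a ∈ X' := hg.2 ⟨a, rfl⟩
    rw [h2, hθ _ hga, hθ _ ha] at h1
    exact (congrFun h1 y₀).symm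
  intro α hα
  have hφα : φ α ∈ OPR Y' := hφ.1.mapsTo hα
  -- Lemma A : θ of the range of α is in the range of φ α
  have hsub : ∀ b ∈ Set.range α, θ b ∈ Set.range (φ α) := by
    intro b hb
    by_contra hnb
    have hp : ∀ w, φ α w ≠ θ b := fun w hw => hnb ⟨w, hw⟩
    obtain ⟨qlo, hqlo, qhi, hqhi, hqlt⟩ := exists_lt_pair hY'
    set β₁ : Y → Y := fun w => if w ≤ θ b then qlo else qhi with hβ₁def
    set β₂ : Y → Y := fun w => if w < θ b then qlo else qhi with hβ₂def
    have hβ₁ : β₁ ∈ OPR Y' := step_le_mem Y' (θ b) hqlo hqhi hqlt.le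
    have hβ₂ : β₂ ∈ OPR Y' := step_lt_mem Y' (θ b) hqlo hqhi hqlt.le
    obtain ⟨g₁, hg₁, hφg₁⟩ := hφ.1.surjOn hβ₁
    obtain ⟨g₂, hg₂, hφg₂⟩ := hφ.1.surjOn hβ₂
    have hcomp1 : φ (g₁ ∘ α) = β₁ ∘ φ α := by rw [hφ.2 α hα g₁ hg₁, hφg₁]
    have hcomp2 : φ (g₂ ∘ α) = β₂ ∘ φ α := by rw [hφ.2 α hα g₂ hg₂, hφg₂]
    have heq : β₁ ∘ φ α = β₂ ∘ φ α := by
      funext w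
      show (if φ α w ≤ θ b then qlo else qhi) = (if φ α w < θ b then qlo else qhi)
      by_cases hle : φ α w ≤ θ b
      · rw [if_pos hle, if_pos (hle.lt_of_ne (hp w))]
      · rw [if_neg hle, if_neg (fun h => hle h.le)]
    have hgg : g₁ ∘ α = g₂ ∘ α :=
      hφ.1.injOn (compmem g₁ hg₁ α hα) (compmem g₂ hg₂ α hα)
        (by rw [hcomp1, hcomp2, heq])
    have hbX' : b ∈ X' := hα.2 hb
    obtain ⟨x, hx⟩ := hb
    have hgb : g₁ b = g₂ b := by
      have := congrFun hgg x
      simpa [hx] using this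
    have h1 : θ (g₁ b) = qlo := by
      rw [← key g₁ hg₁ b hbX', hφg₁]
      show (if θ b ≤ θ b then qlo else qhi) = qlo
      rw [if_pos le_rfl]
    have h2 : θ (g₂ b) = qhi := by
      rw [← key g₂ hg₂ b hbX', hφg₂]
      show (if θ b < θ b then qlo else qhi) = qhi
      rw [if_neg (lt_irrefl _)]
    rw [hgb, h2] at h1
    exact absurd h1 hqlt.ne'
  -- converse inclusion
  have hsup : ∀ y ∈ Set.range (φ α), y ∈ θ '' Set.range α := by
    rintro y ⟨w, hw⟩
    have hyY' : y ∈ Y' := hφα.2 ⟨w, hw⟩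
    obtain ⟨a, haX', hay⟩ := hbij.surjOn hyY'
    refine ⟨a, ?_, hay⟩
    by_contra hna
    have hpa : ∀ t, α t ≠ a := fun t ht => hna ⟨t, ht⟩
    obtain ⟨rlo, hrlo, rhi, hrhi, hrlt⟩ := exists_lt_pair hX'
    set g₁ : X → X := fun t => if t ≤ a then rlo else rhi with hg₁def
    set g₂ : X → X := fun t => if t < a then rlo else rhi with hg₂def
    have hg₁ : g₁ ∈ OPR X' := step_le_mem X' a hrlo hrhi hrlt.le
    have hg₂ : g₂ ∈ OPR X' := step_lt_mem X' a hrlo hrhi hrlt.le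
    have hgg : g₁ ∘ α = g₂ ∘ α := by
      funext t
      show (if α t ≤ a then rlo else rhi) = (if α t < a then rlo else rhi)
      by_cases hle : α t ≤ a
      · rw [if_pos hle, if_pos (hle.lt_of_ne (hpa t))]
      · rw [if_neg hle, if_neg (fun h => hle h.le)]
    have hφgg : φ g₁ ∘ φ α = φ g₂ ∘ φ α := by
      rw [← hφ.2 α hα g₁ hg₁, ← hφ.2 α hα g₂ hg₂, hgg]
    have hval : φ g₁ y = φ g₂ y := by
      have := congrFun hφgg w
      simpa [hw] using this
    rw [← hay, key g₁ hg₁ a haX', key g₂ hg₂ a haX'] at hval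
    have hg₁a : g₁ a = rlo := by show (if a ≤ a then rlo else rhi) = rlo; rw [if_pos le_rfl]
    have hg₂a : g₂ a = rhi := by show (if a < a then rlo else rhi) = rhi; rw [if_neg (lt_irrefl _)]
    rw [hg₁a, hg₂a] at hval
    have : rlo = rhi := hbij.injOn hrlo hrhi hval
    exact absurd this hrlt.ne
  constructor
  · apply Set.Subset.antisymm
    · rintro _ ⟨b, hb, rfl⟩
      exact hsub b hb
    · intro y hy
      exact hsup y hy
  · intro b hb
    have hbX' : b ∈ X' := hα.2 hb
    ext y
    constructor
    · rintro ⟨hy1, hy2⟩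
      obtain ⟨a, haX', hay⟩ := hbij.surjOn hy2
      have : θ (α a) = θ b := by
        rw [← key α hα a haX', hay]
        exact hy1
      have hαa : α a = b := hbij.injOn (hα.2 ⟨a, rfl⟩) hbX' this
      exact ⟨a, ⟨hαa, haX'⟩, hay⟩
    · rintro ⟨a, ⟨ha1, ha2⟩, rfl⟩
      simp only [Set.mem_inter_iff, Set.mem_preimage, Set.mem_singleton_iff]
      exact ⟨by rw [key α hα a ha2, ha1], hbij.mapsTo ha2⟩
end

section
/- Let X be a chain and X' ⊆ X. If S is a finite nonempty subset of X', then there exists an idempotent μ ∈ T_OP(X, X') with ran μ = S. -/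
open Set Function

/-- every finite nonempty subset `S ⊆ X'` is the range of some idempotent
of `T_OP(X, X')`. -/
theorem stmt_14 {X : Type*} [LinearOrder X] (X' : Set X) (S : Set X)
    (hSX' : S ⊆ X') (hfin : S.Finite) (hne : S.Nonempty) :
    ∃ μ ∈ OPR X', μ ∘ μ = μ ∧ Set.range μ = S := by
  classical
  set T : Finset X := hfin.toFinset with hT
  have hTne : T.Nonempty := by
    simpa [hT, Set.Finite.toFinset_nonempty] using hne
  set μ : X → X := fun x =>
    if h : (T.filter (· ≤ x)).Nonempty then (T.filter (· ≤ x)).max' h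
    else T.min' hTne with hμ
  have hmemT : ∀ x, μ x ∈ T := by
    intro x
    by_cases h : (T.filter (· ≤ x)).Nonempty
    · simp only [hμ, dif_pos h]
      exact Finset.filter_subset _ _ ((T.filter (· ≤ x)).max'_mem h)
    · simp only [hμ, dif_neg h]
      exact T.min'_mem hTne
  have hmem : ∀ x, μ x ∈ S := by
    intro x
    have := hmemT x
    simpa [hT, Set.Finite.mem_toFinset] using this
  have hfix : ∀ s ∈ S, μ s = s := by
    intro s hs
    have hsT : s ∈ T := by simpa [hT, Set.Finite.mem_toFinset] using hs
    have hsf : s ∈ T.filter (· ≤ s) := by simp [hsT]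
    have h : (T.filter (· ≤ s)).Nonempty := ⟨s, hsf⟩
    simp only [hμ, dif_pos h]
    refine le_antisymm (Finset.max'_le _ h _ ?_) (Finset.le_max' _ _ hsf)
    intro y hy
    exact (Finset.mem_filter.mp hy).2
  have hmono : Monotone μ := by
    intro x y hxy
    have hμyS : μ y ∈ T := hmemT y
    by_cases hx : (T.filter (· ≤ x)).Nonempty
    · have hy : (T.filter (· ≤ y)).Nonempty := by
        obtain ⟨a, ha⟩ := hx
        rw [Finset.mem_filter] at ha
        exact ⟨a, Finset.mem_filter.mpr ⟨ha.1, le_trans ha.2 hxy⟩⟩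
      simp only [hμ, dif_pos hx, dif_pos hy]
      apply Finset.max'_le
      intro a ha
      rw [Finset.mem_filter] at ha
      have : a ∈ T.filter (· ≤ y) := Finset.mem_filter.mpr ⟨ha.1, ha.2.trans hxy⟩
      exact Finset.le_max' _ _ this
    · simp only [hμ, dif_neg hx]
      exact (Finset.min'_le T _ hμyS).trans (le_of_eq rfl)
  refine ⟨μ, ⟨hmono, ?_⟩, ?_, ?_⟩
  · rintro _ ⟨x, rfl⟩
    exact hSX' (hmem x)
  · funext x
    exact hfix _ (hmem x)
  · apply Set.Subset.antisymm
    · rintro _ ⟨x, rfl⟩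
      exact hmem x
    · intro s hs
      exact ⟨s, hfix s hs⟩
end

section
/- With X = ℝ, X' = {1, 2}, Y = [2, 5) ⊆ ℝ, Y' = {3, 4}: the semigroups T_OP(ℝ, {1,2}) and T_OP([2,5), {3,4}) are isomorphic, although ℝ and [2,5) are neither order-isomorphic nor order-anti-isomorphic. -/
open Set Function

namespace Stmt18

open Cardinal

variable {α β : Type} [LinearOrder α] [LinearOrder β]

lemma mem_OPR_iff {p q : α} {f : α → α} :
    f ∈ OPR {p, q} ↔ Monotone f ∧ ∀ x, f x = p ∨ f x = q := by
  constructor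
  · rintro ⟨h1, h2⟩
    refine ⟨h1, fun x => ?_⟩
    have := h2 (mem_range_self (f := f) x)
    simpa using this
  · rintro ⟨h1, h2⟩
    exact ⟨h1, by rintro y ⟨x, rfl⟩; simpa using h2 x⟩

/-- Class A: maps sending `p` (hence everything in `{p,q}`) to `q`. -/
def clsA (p q : α) : Set (α → α) := {f | f ∈ OPR {p, q} ∧ f p = q}
/-- Class B: maps fixing `p` and `q`. -/
def clsB (p q : α) : Set (α → α) := {f | f ∈ OPR {p, q} ∧ f p = p ∧ f q = q}
/-- Class C: maps sending `q` (hence everything in `{p,q}`) to `p`. -/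
def clsC (p q : α) : Set (α → α) := {f | f ∈ OPR {p, q} ∧ f q = p}

section basic

variable {p q : α}

lemma opr_comp {f g : α → α} (hf : f ∈ OPR {p, q}) (hg : g ∈ OPR {p, q}) :
    g ∘ f ∈ OPR {p, q} := by
  rw [mem_OPR_iff] at hf hg ⊢
  exact ⟨hg.1.comp hf.1, fun x => hg.2 (f x)⟩

lemma clsA_apply (hpq : p < q) {g : α → α} (hg : g ∈ clsA p q) {x : α}
    (hx : x = p ∨ x = q) : g x = q := by
  obtain ⟨hgS, hgp⟩ := hg
  have hq : g q = q := by
    rcases (mem_OPR_iff.1 hgS).2 q with h | h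
    · exfalso
      have : g p ≤ g q := (mem_OPR_iff.1 hgS).1 hpq.le
      rw [hgp, h] at this
      exact absurd this (not_le.2 hpq)
    · exact h
  rcases hx with rfl | rfl
  · exact hgp
  · exact hq

lemma clsC_apply (hpq : p < q) {g : α → α} (hg : g ∈ clsC p q) {x : α}
    (hx : x = p ∨ x = q) : g x = p := by
  obtain ⟨hgS, hgq⟩ := hg
  have hp : g p = p := by
    rcases (mem_OPR_iff.1 hgS).2 p with h | h
    · exact h
    · exfalso
      have : g p ≤ g q := (mem_OPR_iff.1 hgS).1 hpq.le
      rw [hgq, h] at this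
      exact absurd this (not_le.2 hpq)
  rcases hx with rfl | rfl
  · exact hp
  · exact hgq

lemma clsB_apply {g : α → α} (hg : g ∈ clsB p q) {x : α}
    (hx : x = p ∨ x = q) : g x = x := by
  rcases hx with rfl | rfl
  · exact hg.2.1
  · exact hg.2.2

lemma cls_cases (hpq : p < q) {f : α → α} (hf : f ∈ OPR {p, q}) :
    f ∈ clsA p q ∨ f ∈ clsB p q ∨ f ∈ clsC p q := by
  rcases (mem_OPR_iff.1 hf).2 p with hp | hp
  · rcases (mem_OPR_iff.1 hf).2 q with hq | hq
    · exact Or.inr (Or.inr ⟨hf, hq⟩)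
    · exact Or.inr (Or.inl ⟨hf, hp, hq⟩)
  · exact Or.inl ⟨hf, hp⟩

lemma disjAB (hpq : p < q) {f : α → α} (h1 : f ∈ clsA p q) (h2 : f ∈ clsB p q) : False := by
  have := h1.2.symm.trans h2.2.1
  exact absurd this (ne_of_gt hpq)

lemma disjAC (hpq : p < q) {f : α → α} (h1 : f ∈ clsA p q) (h2 : f ∈ clsC p q) : False := by
  have hm : f p ≤ f q := (mem_OPR_iff.1 h1.1).1 hpq.le
  rw [h1.2, h2.2] at hm
  exact absurd hm (not_le.2 hpq)

lemma disjBC (hpq : p < q) {f : α → α} (h1 : f ∈ clsB p q) (h2 : f ∈ clsC p q) : False := by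
  have := h1.2.2.symm.trans h2.2
  exact absurd this (ne_of_gt hpq)

lemma constq_mem_A (hpq : p < q) : (fun _ : α => q) ∈ clsA p q :=
  ⟨mem_OPR_iff.2 ⟨monotone_const, fun _ => Or.inr rfl⟩, rfl⟩

lemma constp_mem_C (hpq : p < q) : (fun _ : α => p) ∈ clsC p q :=
  ⟨mem_OPR_iff.2 ⟨monotone_const, fun _ => Or.inl rfl⟩, rfl⟩

end basic

section card

variable {p q : α}

/-- Upper cardinality bound for `OPR {p,q}` when `α` order-embeds into `ℝ`. -/
lemma card_OPR_le (hpq : p < q) (e : α ↪o ℝ) :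
    #(OPR {p, q} : Set (α → α)) ≤ Cardinal.continuum := by
  classical
  set S := (OPR {p, q} : Set (α → α)) with hS
  let D : (α → α) → Set α := fun f => {x | f x = p}
  let s : (α → α) → ℝ := fun f => sSup (e '' D f)
  let v : (α → α) → ℝ := fun f => if h : ∃ x, e x = s f then e (f h.choose) else 0
  have hDdown : ∀ f ∈ S, ∀ x y : α, x ≤ y → f y = p → f x = p := by
    intro f hf x y hxy hy
    rcases (mem_OPR_iff.1 hf).2 x with h | h
    · exact h
    · exfalso
      have := (mem_OPR_iff.1 hf).1 hxy
      rw [h, hy] at this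
      exact absurd this (not_le.2 hpq)
  have key : ∀ f ∈ S, ∀ g ∈ S, (D f = ∅) = (D g = ∅) → (D f = Set.univ) = (D g = Set.univ) →
      s f = s g → v f = v g → f = g := by
    intro f hf g hg h0 h1 hs hv
    by_cases hf0 : D f = ∅
    · have hg0 : D g = ∅ := h0 ▸ hf0
      funext x
      have hfx : f x = q := by
        rcases (mem_OPR_iff.1 hf).2 x with h | h
        · exact absurd (show x ∈ D f from h) (by rw [hf0]; exact notMem_empty x)
        · exact h
      have hgx : g x = q := by
        rcases (mem_OPR_iff.1 hg).2 x with h | h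
        · exact absurd (show x ∈ D g from h) (by rw [hg0]; exact notMem_empty x)
        · exact h
      rw [hfx, hgx]
    · by_cases hf1 : D f = Set.univ
      · have hg1 : D g = Set.univ := h1 ▸ hf1
        funext x
        have hfx : f x = p := by have : x ∈ D f := by rw [hf1]; trivial
                                 exact this
        have hgx : g x = p := by have : x ∈ D g := by rw [hg1]; trivial
                                 exact this
        rw [hfx, hgx]
      · have hg0 : D g ≠ ∅ := fun h => hf0 (h0 ▸ h)
        have hg1 : D g ≠ Set.univ := fun h => hf1 (h1 ▸ h)
        -- generic reconstruction facts
        have recon : ∀ f ∈ S, D f ≠ ∅ → D f ≠ Set.univ →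
            BddAbove (e '' D f) ∧ (e '' D f).Nonempty ∧
            (∀ x, e x < s f → f x = p) ∧ (∀ x, s f < e x → f x = q) := by
          intro f hf hf0 hf1
          obtain ⟨a, ha⟩ := (Set.ne_univ_iff_exists_notMem _).1 hf1
          have hbdd : BddAbove (e '' D f) := by
            refine ⟨e a, ?_⟩
            rintro r ⟨d, hd, rfl⟩
            refine e.monotone ?_
            by_contra hlt
            push_neg at hlt
            exact ha (hDdown f hf a d hlt.le hd)
          have hne : (e '' D f).Nonempty :=
            (Set.nonempty_iff_ne_empty.2 hf0).image e
          refine ⟨hbdd, hne, ?_, ?_⟩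
          · intro x hx
            obtain ⟨r, hr, hxr⟩ := exists_lt_of_lt_csSup hne hx
            obtain ⟨d, hd, rfl⟩ := hr
            exact hDdown f hf x d (e.lt_iff_lt.1 hxr).le hd
          · intro x hx
            rcases (mem_OPR_iff.1 hf).2 x with h | h
            · exact absurd (le_csSup hbdd ⟨x, h, rfl⟩) (not_le.2 hx)
            · exact h
        obtain ⟨hbddf, hnef, hltf, hgtf⟩ := recon f hf hf0 hf1
        obtain ⟨hbddg, hneg, hltg, hgtg⟩ := recon g hg hg0 hg1
        funext x
        rcases lt_trichotomy (e x) (s f) with h | h | h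
        · rw [hltf x h, hltg x (by rw [← hs]; exact h)]
        · have hex : ∃ y, e y = s f := ⟨x, h⟩
          have e1 : v f = e (f hex.choose) := dif_pos hex
          have hexg : ∃ y, e y = s g := by rw [← hs]; exact hex
          have e2 : v g = e (g hexg.choose) := dif_pos hexg
          have hx1 : x = hex.choose := e.injective (h.trans hex.choose_spec.symm)
          have hx2 : x = hexg.choose := e.injective (by rw [h, hs]; exact hexg.choose_spec.symm)
          apply e.injective
          calc e (f x) = v f := by rw [hx1, e1]
            _ = v g := hv
            _ = e (g x) := by rw [hx2, e2]
        · rw [hgtf x h, hgtg x (by rw [← hs]; exact h)]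
  have hinj : #S ≤ #(Prop × Prop × ℝ × ℝ) := by
    refine mk_le_of_injective
      (f := fun f : S => ((D f.1 = ∅, D f.1 = Set.univ, s f.1, v f.1) : Prop × Prop × ℝ × ℝ)) ?_
    rintro ⟨f, hf⟩ ⟨g, hg⟩ h
    simp only [Prod.mk.injEq] at h
    exact Subtype.ext (key f hf g hg h.1 h.2.1 h.2.2.1 h.2.2.2)
  refine hinj.trans ?_
  have : #(Prop × Prop × ℝ × ℝ) = 2 * (2 * (𝔠 * 𝔠)) := by
    simp [Cardinal.mk_real, Cardinal.mk_Prop]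
  rw [this, Cardinal.mul_eq_self Cardinal.aleph0_le_continuum]
  calc 2 * (2 * 𝔠) ≤ 𝔠 * (𝔠 * 𝔠) := by
        gcongr <;> first
          | exact (Cardinal.nat_lt_continuum 2).le
          | exact le_rfl
    _ = 𝔠 := by rw [Cardinal.mul_eq_self Cardinal.aleph0_le_continuum,
                    Cardinal.mul_eq_self Cardinal.aleph0_le_continuum]

/-- The basic "threshold" family of members of `OPR {p,q}`. -/
def fam (p q : α) (a : α) : α → α := fun x => if a ≤ x then q else p

lemma fam_mem (hpq : p < q) (a : α) : fam p q a ∈ OPR {p, q} := by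
  refine mem_OPR_iff.2 ⟨?_, fun x => ?_⟩
  · intro x y hxy
    simp only [fam]
    by_cases h : a ≤ x
    · rw [if_pos h, if_pos (h.trans hxy)]
    · rw [if_neg h]
      by_cases h' : a ≤ y
      · rw [if_pos h']; exact hpq.le
      · rw [if_neg h']
  · by_cases h : a ≤ x
    · exact Or.inr (by simp only [fam]; rw [if_pos h])
    · exact Or.inl (by simp only [fam]; rw [if_neg h])

lemma fam_inj (hpq : p < q) : Function.Injective (fam p q) := by
  intro a b h
  by_contra hne
  rcases lt_or_gt_of_ne hne with hlt | hlt
  · have h1 : fam p q a a = q := if_pos le_rfl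
    have h2 : fam p q b a = p := if_neg (not_le.2 hlt)
    rw [h] at h1
    exact absurd (h1.symm.trans h2) (ne_of_gt hpq)
  · have h1 : fam p q b b = q := if_pos le_rfl
    have h2 : fam p q a b = p := if_neg (not_le.2 hlt)
    rw [← h] at h1
    exact absurd (h1.symm.trans h2) (ne_of_gt hpq)

lemma fam_mem_A (hpq : p < q) {a : α} (ha : a ≤ p) : fam p q a ∈ clsA p q :=
  ⟨fam_mem hpq a, if_pos ha⟩

lemma fam_mem_B (hpq : p < q) {a : α} (ha : p < a) (ha' : a ≤ q) : fam p q a ∈ clsB p q :=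
  ⟨fam_mem hpq a, by simp only [fam]; rw [if_neg (not_le.2 ha)], by simp only [fam]; rw [if_pos ha']⟩

lemma fam_mem_C (hpq : p < q) {a : α} (ha : q < a) : fam p q a ∈ clsC p q :=
  ⟨fam_mem hpq a, by simp only [fam]; rw [if_neg (not_le.2 ha)]⟩

end card

section iso

variable {p q : α} {r s : β}

theorem exists_sgIso (hpq : p < q) (hrs : r < s)
    (hA : #(clsA p q) = #(clsA r s)) (hB : #(clsB p q) = #(clsB r s))
    (hC : #(clsC p q) = #(clsC r s)) :
    ∃ φ : (α → α) → (β → β), IsSgIso {p, q} {r, s} φ := by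
  classical
  obtain ⟨eA0⟩ := Cardinal.eq.1 hA
  obtain ⟨eB⟩ := Cardinal.eq.1 hB
  obtain ⟨eC0⟩ := Cardinal.eq.1 hC
  have hcq := constq_mem_A (p := p) hpq
  have hcs := constq_mem_A (p := r) hrs
  have hcp := constp_mem_C (q := q) hpq
  have hcr := constp_mem_C (q := s) hrs
  let eA : ↥(clsA p q) ≃ ↥(clsA r s) :=
    eA0.trans (Equiv.swap (eA0 ⟨fun _ => q, hcq⟩) ⟨fun _ => s, hcs⟩)
  let eC : ↥(clsC p q) ≃ ↥(clsC r s) :=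
    eC0.trans (Equiv.swap (eC0 ⟨fun _ => p, hcp⟩) ⟨fun _ => r, hcr⟩)
  have heA : eA ⟨fun _ => q, hcq⟩ = ⟨fun _ => s, hcs⟩ :=
    Equiv.swap_apply_left (eA0 ⟨fun _ => q, hcq⟩) ⟨fun _ => s, hcs⟩
  have heC : eC ⟨fun _ => p, hcp⟩ = ⟨fun _ => r, hcr⟩ :=
    Equiv.swap_apply_left (eC0 ⟨fun _ => p, hcp⟩) ⟨fun _ => r, hcr⟩
  let φ : (α → α) → (β → β) := fun f =>
    if h : f ∈ clsA p q then (eA ⟨f, h⟩).1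
    else if h : f ∈ clsB p q then (eB ⟨f, h⟩).1
    else if h : f ∈ clsC p q then (eC ⟨f, h⟩).1
    else fun _ => s
  have φA : ∀ (f : α → α) (h : f ∈ clsA p q), φ f = (eA ⟨f, h⟩).1 := fun f h => dif_pos h
  have φB : ∀ (f : α → α) (h : f ∈ clsB p q), φ f = (eB ⟨f, h⟩).1 := by
    intro f h
    have hA' : f ∉ clsA p q := fun h' => disjAB hpq h' h
    show (if h' : f ∈ clsA p q then (eA ⟨f, h'⟩).1 else _) = _
    rw [dif_neg hA', dif_pos h]
  have φC : ∀ (f : α → α) (h : f ∈ clsC p q), φ f = (eC ⟨f, h⟩).1 := by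
    intro f h
    have hA' : f ∉ clsA p q := fun h' => disjAC hpq h' h
    have hB' : f ∉ clsB p q := fun h' => disjBC hpq h' h
    show (if h' : f ∈ clsA p q then (eA ⟨f, h'⟩).1 else _) = _
    rw [dif_neg hA', dif_neg hB', dif_pos h]
  have φmemA : ∀ (f : α → α), f ∈ clsA p q → φ f ∈ clsA r s := by
    intro f h; rw [φA f h]; exact (eA ⟨f, h⟩).2
  have φmemB : ∀ (f : α → α), f ∈ clsB p q → φ f ∈ clsB r s := by
    intro f h; rw [φB f h]; exact (eB ⟨f, h⟩).2
  have φmemC : ∀ (f : α → α), f ∈ clsC p q → φ f ∈ clsC r s := by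
    intro f h; rw [φC f h]; exact (eC ⟨f, h⟩).2
  have hMapsTo : MapsTo φ (OPR {p, q}) (OPR {r, s}) := by
    intro f hf
    rcases cls_cases hpq hf with h | h | h
    · exact (φmemA f h).1
    · exact (φmemB f h).1
    · exact (φmemC f h).1
  refine ⟨φ, ⟨hMapsTo, ?_, ?_⟩, ?_⟩
  · -- InjOn
    intro f hf g hg heq
    rcases cls_cases hpq hf with h1 | h1 | h1 <;> rcases cls_cases hpq hg with h2 | h2 | h2
    · rw [φA f h1, φA g h2] at heq
      have := eA.injective (Subtype.coe_injective heq)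
      exact congrArg Subtype.val this
    · exact absurd heq (fun heq => disjAB hrs (φmemA f h1) (heq ▸ φmemB g h2))
    · exact absurd heq (fun heq => disjAC hrs (φmemA f h1) (heq ▸ φmemC g h2))
    · exact absurd heq (fun heq => disjAB hrs (φmemA g h2) (heq ▸ φmemB f h1))
    · rw [φB f h1, φB g h2] at heq
      have := eB.injective (Subtype.coe_injective heq)
      exact congrArg Subtype.val this
    · exact absurd heq (fun heq => disjBC hrs (φmemB f h1) (heq ▸ φmemC g h2))
    · exact absurd heq (fun heq => disjAC hrs (φmemA g h2) (heq ▸ φmemC f h1))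
    · exact absurd heq (fun heq => disjBC hrs (φmemB g h2) (heq ▸ φmemC f h1))
    · rw [φC f h1, φC g h2] at heq
      have := eC.injective (Subtype.coe_injective heq)
      exact congrArg Subtype.val this
  · -- SurjOn
    intro g hg
    rcases cls_cases hrs hg with h | h | h
    · refine ⟨(eA.symm ⟨g, h⟩).1, (eA.symm ⟨g, h⟩).2.1, ?_⟩
      rw [φA _ (eA.symm ⟨g, h⟩).2]
      have : (⟨(eA.symm ⟨g, h⟩).1, (eA.symm ⟨g, h⟩).2⟩ : ↥(clsA p q)) = eA.symm ⟨g, h⟩ := rfl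
      rw [this, eA.apply_symm_apply]
    · refine ⟨(eB.symm ⟨g, h⟩).1, (eB.symm ⟨g, h⟩).2.1, ?_⟩
      rw [φB _ (eB.symm ⟨g, h⟩).2]
      have : (⟨(eB.symm ⟨g, h⟩).1, (eB.symm ⟨g, h⟩).2⟩ : ↥(clsB p q)) = eB.symm ⟨g, h⟩ := rfl
      rw [this, eB.apply_symm_apply]
    · refine ⟨(eC.symm ⟨g, h⟩).1, (eC.symm ⟨g, h⟩).2.1, ?_⟩
      rw [φC _ (eC.symm ⟨g, h⟩).2]
      have : (⟨(eC.symm ⟨g, h⟩).1, (eC.symm ⟨g, h⟩).2⟩ : ↥(clsC p q)) = eC.symm ⟨g, h⟩ := rfl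
      rw [this, eC.apply_symm_apply]
  · -- homomorphism
    intro f hf g hg
    have hφf : φ f ∈ OPR {r, s} := hMapsTo hf
    rcases cls_cases hpq hg with hgc | hgc | hgc
    · have h1 : g ∘ f = fun _ => q :=
        funext fun x => clsA_apply hpq hgc ((mem_OPR_iff.1 hf).2 x)
      rw [h1, φA _ hcq, heA]
      funext y
      exact (clsA_apply hrs (φmemA g hgc) ((mem_OPR_iff.1 hφf).2 y)).symm
    · have h1 : g ∘ f = f :=
        funext fun x => clsB_apply hgc ((mem_OPR_iff.1 hf).2 x)
      rw [h1]
      funext y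
      exact (clsB_apply (φmemB g hgc) ((mem_OPR_iff.1 hφf).2 y)).symm
    · have h1 : g ∘ f = fun _ => p :=
        funext fun x => clsC_apply hpq hgc ((mem_OPR_iff.1 hf).2 x)
      rw [h1, φC _ hcp, heC]
      funext y
      exact (clsC_apply hrs (φmemC g hgc) ((mem_OPR_iff.1 hφf).2 y)).symm

end iso

section instantiation

abbrev Y : Type := ↥(Set.Ico (2 : ℝ) 5)

def y3 : Y := ⟨3, by norm_num⟩
def y4 : Y := ⟨4, by norm_num⟩

lemma y34 : y3 < y4 := Subtype.mk_lt_mk.mpr (by norm_num)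

lemma h12 : (1 : ℝ) < 2 := by norm_num

/-- Lower bound helper: inject a real interval into a class on the real side. -/
lemma card_real_class_ge {u v : ℝ} (huv : u < v) {C : Set (ℝ → ℝ)}
    (hmem : ∀ a : ℝ, a ∈ Set.Ioo u v → fam (1 : ℝ) 2 a ∈ C) :
    Cardinal.continuum ≤ #C := by
  rw [← Cardinal.mk_Ioo_real huv]
  refine Cardinal.mk_le_of_injective
    (f := fun a : Set.Ioo u v => (⟨fam (1 : ℝ) 2 a.1, hmem a.1 a.2⟩ : C)) ?_
  intro a b hab
  exact Subtype.ext (fam_inj h12 (congrArg Subtype.val hab))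

lemma card_Y_class_ge {u v : ℝ} (huv : u < v) (hsub : Set.Ioo u v ⊆ Set.Ico (2:ℝ) 5)
    {C : Set (Y → Y)}
    (hmem : ∀ a : ℝ, (ha : a ∈ Set.Ioo u v) → fam y3 y4 ⟨a, hsub ha⟩ ∈ C) :
    Cardinal.continuum ≤ #C := by
  rw [← Cardinal.mk_Ioo_real huv]
  refine Cardinal.mk_le_of_injective
    (f := fun a : Set.Ioo u v => (⟨fam y3 y4 ⟨a.1, hsub a.2⟩, hmem a.1 a.2⟩ : C)) ?_
  intro a b hab
  have := fam_inj y34 (congrArg Subtype.val hab)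
  exact Subtype.ext (Subtype.mk_eq_mk.mp this)

lemma card_real_le {C : Set (ℝ → ℝ)} (hsub : C ⊆ OPR {1, 2}) :
    Cardinal.mk C ≤ Cardinal.continuum :=
  (Cardinal.mk_le_mk_of_subset hsub).trans
    (card_OPR_le h12 (OrderIso.refl ℝ).toOrderEmbedding)

lemma card_Y_le {C : Set (Y → Y)} (hsub : C ⊆ OPR {y3, y4}) :
    Cardinal.mk C ≤ Cardinal.continuum :=
  (Cardinal.mk_le_mk_of_subset hsub).trans
    (card_OPR_le y34 (OrderEmbedding.subtype _))

lemma cardA : #(clsA (1:ℝ) 2) = #(clsA y3 y4) := by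
  have h1 : #(clsA (1:ℝ) 2) = Cardinal.continuum := by
    refine le_antisymm (card_real_le fun f hf => hf.1) ?_
    exact card_real_class_ge (show (0:ℝ) < 1 by norm_num)
      (fun a ha => fam_mem_A h12 ha.2.le)
  have h2 : #(clsA y3 y4) = Cardinal.continuum := by
    refine le_antisymm (card_Y_le fun f hf => hf.1) ?_
    refine card_Y_class_ge (show (2:ℝ) < 3 by norm_num)
      (fun x hx => ⟨hx.1.le, hx.2.trans (by norm_num)⟩) (fun a ha => ?_)
    exact fam_mem_A y34 (Subtype.mk_le_mk.2 ha.2.le)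
  rw [h1, h2]

lemma cardB : #(clsB (1:ℝ) 2) = #(clsB y3 y4) := by
  have h1 : #(clsB (1:ℝ) 2) = Cardinal.continuum := by
    refine le_antisymm (card_real_le fun f hf => hf.1) ?_
    exact card_real_class_ge (show (1:ℝ) < 2 by norm_num)
      (fun a ha => fam_mem_B h12 ha.1 ha.2.le)
  have h2 : #(clsB y3 y4) = Cardinal.continuum := by
    refine le_antisymm (card_Y_le fun f hf => hf.1) ?_
    refine card_Y_class_ge (show (3:ℝ) < 4 by norm_num)
      (fun x hx => ⟨by linarith [hx.1], hx.2.trans (by norm_num)⟩) (fun a ha => ?_)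
    exact fam_mem_B y34 (Subtype.mk_lt_mk.2 ha.1)
      (Subtype.mk_le_mk.2 ha.2.le)
  rw [h1, h2]

lemma cardC : #(clsC (1:ℝ) 2) = #(clsC y3 y4) := by
  have h1 : #(clsC (1:ℝ) 2) = Cardinal.continuum := by
    refine le_antisymm (card_real_le fun f hf => hf.1) ?_
    exact card_real_class_ge (show (2:ℝ) < 3 by norm_num)
      (fun a ha => fam_mem_C h12 ha.1)
  have h2 : #(clsC y3 y4) = Cardinal.continuum := by
    refine le_antisymm (card_Y_le fun f hf => hf.1) ?_
    refine card_Y_class_ge (show (4:ℝ) < 5 by norm_num)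
      (fun x hx => ⟨by linarith [hx.1], hx.2⟩) (fun a ha => ?_)
    exact fam_mem_C y34 (Subtype.mk_lt_mk.2 ha.1)
  rw [h1, h2]

end instantiation

end Stmt18

/-- `T_OP(ℝ, {1, 2}) ≅ T_OP([2, 5), {3, 4})`, although `ℝ` and `[2, 5)` are
neither order-isomorphic nor order-anti-isomorphic. -/
theorem stmt_18 :
    (∃ φ : (ℝ → ℝ) → (↥(Set.Ico (2 : ℝ) 5) → ↥(Set.Ico (2 : ℝ) 5)),
      IsSgIso ({1, 2} : Set ℝ)
        ({⟨3, by norm_num⟩, ⟨4, by norm_num⟩} : Set ↥(Set.Ico (2 : ℝ) 5)) φ) ∧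
    ¬ ∃ θ : ℝ ≃ ↥(Set.Ico (2 : ℝ) 5),
        (∀ a b : ℝ, a ≤ b ↔ θ a ≤ θ b) ∨ (∀ a b : ℝ, a ≤ b ↔ θ b ≤ θ a) := by
  constructor
  · exact Stmt18.exists_sgIso Stmt18.h12 Stmt18.y34 Stmt18.cardA Stmt18.cardB Stmt18.cardC
  · rintro ⟨θ, h | h⟩
    · set m := θ.symm ⟨2, by norm_num⟩ with hm
      have hmin : ∀ a : ℝ, m ≤ a := by
        intro a
        refine (h m a).mpr ?_
        rw [hm, θ.apply_symm_apply]
        exact Subtype.mk_le_mk.2 (θ a).2.1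
      have := hmin (m - 1)
      linarith
    · set m := θ.symm ⟨2, by norm_num⟩ with hm
      have hmax : ∀ a : ℝ, a ≤ m := by
        intro a
        refine (h a m).mpr ?_
        rw [hm, θ.apply_symm_apply]
        exact Subtype.mk_le_mk.2 (θ a).2.1
      have := hmax (m + 1)
      linarith
end

section
/- Let X, Y be chains, X' ⊆ X with |X'| ≥ 3 and Y' ⊆ Y with |Y'| ≥ 3. Then T_OP(X, X') ≅ T_OP(Y, Y') (as semigroups) if and only if there exists an order-isomorphism or order-anti-isomorphism θ : X → Y with θ(X') = Y'. -/
open Set Function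

open scoped Classical
set_option linter.unusedSectionVars false

section Basic

variable {X : Type*} [LinearOrder X]

/-- two valued step map -/
noncomputable def mk2 (A : Set X) (p q : X) : X → X := fun t => if t ∈ A then p else q

def cutOf (f : X → X) : Set X := {t | ∃ u, f t < f u}

def TwoValF (f : X → X) : Prop :=
  ∃ p q, p < q ∧ (∀ t, f t = p ∨ f t = q) ∧ (∃ t, f t = p) ∧ (∃ t, f t = q)

def RZ (X' : Set X) (f : X → X) : Prop := ∀ g ∈ OPR X', f ∘ g = f

def Lrel (X' : Set X) (f f' : X → X) : Prop :=
  (∃ g ∈ OPR X', f' = g ∘ f) ∧ (∃ g ∈ OPR X', f = g ∘ f')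

def Rank2 (X' : Set X) (f : X → X) : Prop :=
  f ∈ OPR X' ∧ ¬ RZ X' f ∧ ∀ g ∈ OPR X', ¬ RZ X' (g ∘ f) → Lrel X' f (g ∘ f)

variable {X' : Set X}

lemma opr_comp {f g : X → X} (hf : f ∈ OPR X') (hg : g ∈ OPR X') : g ∘ f ∈ OPR X' :=
  ⟨hg.1.comp hf.1, fun y hy => by
    obtain ⟨t, ht⟩ := hy
    exact hg.2 ⟨f t, ht⟩⟩

lemma const_mem {a : X} (ha : a ∈ X') : Function.const X a ∈ OPR X' :=
  ⟨monotone_const, fun y hy => by obtain ⟨t, ht⟩ := hy; rwa [← ht]⟩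

lemma mk2_of_mem {A : Set X} {p q t : X} (ht : t ∈ A) : mk2 A p q t = p := if_pos ht

lemma mk2_of_notMem {A : Set X} {p q t : X} (ht : t ∉ A) : mk2 A p q t = q := if_neg ht

lemma mk2_mem {A : Set X} {p q : X} (hA : IsLowerSet A) (hp : p ∈ X') (hq : q ∈ X')
    (hpq : p ≤ q) : mk2 A p q ∈ OPR X' := by
  constructor
  · intro a b hab
    by_cases hb : b ∈ A
    · rw [mk2_of_mem (hA hab hb), mk2_of_mem hb]
    · by_cases ha : a ∈ A
      · rw [mk2_of_mem ha, mk2_of_notMem hb]; exact hpq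
      · rw [mk2_of_notMem ha, mk2_of_notMem hb]
  · intro y hy
    obtain ⟨t, ht⟩ := hy
    by_cases h : t ∈ A
    · rw [mk2_of_mem h] at ht; rwa [← ht]
    · rw [mk2_of_notMem h] at ht; rwa [← ht]

lemma cutOf_lower {f : X → X} (hf : Monotone f) : IsLowerSet (cutOf f) := by
  intro a b hba ha
  obtain ⟨u, hu⟩ := ha
  exact ⟨u, lt_of_le_of_lt (hf hba) hu⟩

/-- for a monotone map with values among `{p,q}`, `p<q`, the cut is the preimage of `p`. -/
lemma cut_mem_iff {f : X → X} {p q : X} (hpq : p < q)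
    (hv : ∀ t, f t = p ∨ f t = q) (hq : ∃ t, f t = q) {t : X} :
    t ∈ cutOf f ↔ f t = p := by
  constructor
  · intro ⟨u, hu⟩
    rcases hv t with h | h
    · exact h
    · exfalso
      rcases hv u with h' | h' <;> rw [h, h'] at hu
      · exact absurd (hpq.trans hu) (lt_irrefl _)
      · exact lt_irrefl _ hu
  · intro h
    obtain ⟨u, hu⟩ := hq
    exact ⟨u, by rw [h, hu]; exact hpq⟩

lemma mk2_cutOf {A : Set X} {p q : X} (hpq : p < q) (hA : A.Nonempty) (hA' : A ≠ univ) :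
    cutOf (mk2 A p q) = A := by
  obtain ⟨u, hu⟩ := (ne_univ_iff_exists_notMem A).1 hA'
  ext t
  rw [cut_mem_iff hpq (fun t => by
      by_cases h : t ∈ A
      · exact Or.inl (mk2_of_mem h)
      · exact Or.inr (mk2_of_notMem h)) ⟨u, mk2_of_notMem hu⟩]
  constructor
  · intro h
    by_contra ht
    rw [mk2_of_notMem ht] at h
    exact absurd (h ▸ hpq) (lt_irrefl _)
  · exact mk2_of_mem

lemma mk2_eq_self {A : Set X} {p q : X} : mk2 A p q '' A ⊆ {p} := by
  rintro y ⟨t, ht, rfl⟩; exact mk2_of_mem ht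

/-- characterization: `RZ` iff constant (for maps, given `X'` nonempty). -/
lemma rz_iff_const {f : X → X} (hf : f ∈ OPR X') {a : X} (ha : a ∈ X') :
    RZ X' f ↔ ∃ b, f = Function.const X b := by
  constructor
  · intro h
    refine ⟨f a, funext fun t => ?_⟩
    have := congrFun (h (Function.const X a) (const_mem ha)) t
    simpa using this.symm
  · rintro ⟨b, rfl⟩ g _
    rfl

lemma const_rz {b : X} : RZ X' (Function.const X b) := fun g _ => rfl

lemma lrel_fibers {f f' : X → X} (h : Lrel X' f f') {t u : X} :
    f t = f u ↔ f' t = f' u := by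
  obtain ⟨⟨g, _, hg⟩, ⟨g', _, hg'⟩⟩ := h
  constructor
  · intro h; rw [hg]; simp only [comp_apply, h]
  · intro h; rw [hg']; simp only [comp_apply, h]

/-- two monotone two-valued maps with the same fibers have the same cut. -/
lemma cut_of_fibers {f f' : X → X} (hf : Monotone f) (hf' : Monotone f')
    (h : ∀ t u, f t = f u ↔ f' t = f' u) : cutOf f = cutOf f' := by
  have key : ∀ t, t ∈ cutOf f ↔ ∃ u, t < u ∧ f t ≠ f u := by
    intro t
    constructor
    · rintro ⟨u, hu⟩
      exact ⟨u, (hf.reflect_lt hu), ne_of_lt hu⟩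
    · rintro ⟨u, htu, hne⟩
      exact ⟨u, lt_of_le_of_ne (hf htu.le) hne⟩
  have key' : ∀ t, t ∈ cutOf f' ↔ ∃ u, t < u ∧ f' t ≠ f' u := by
    intro t
    constructor
    · rintro ⟨u, hu⟩
      exact ⟨u, (hf'.reflect_lt hu), ne_of_lt hu⟩
    · rintro ⟨u, htu, hne⟩
      exact ⟨u, lt_of_le_of_ne (hf' htu.le) hne⟩
  ext t
  rw [key, key']
  refine exists_congr fun u => and_congr_right fun _ => ?_
  exact not_congr (h t u)

end Basic
section Rank2Char

variable {X : Type*} [LinearOrder X] {X' : Set X}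

lemma twoVal_rank2 {f : X → X} (hf : f ∈ OPR X') (h2 : TwoValF f) : Rank2 X' f := by
  obtain ⟨p, q, hpq, hv, ⟨t0, hp⟩, ⟨t1, hq⟩⟩ := h2
  have hpX : p ∈ X' := hf.2 ⟨t0, hp⟩
  have hqX : q ∈ X' := hf.2 ⟨t1, hq⟩
  refine ⟨hf, ?_, ?_⟩
  · rw [rz_iff_const hf hpX]
    rintro ⟨b, hb⟩
    rw [hb] at hp hq
    exact absurd (hp.symm.trans hq ▸ hpq) (lt_irrefl _)
  · intro g hg hnrz
    have hgpq : g p ≠ g q := by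
      intro h
      apply hnrz
      have : g ∘ f = Function.const X (g p) := by
        funext w
        rcases hv w with h' | h' <;> simp [h', h]
      rw [this]
      exact const_rz
    have hgpq' : g p < g q := lt_of_le_of_ne (hg.1 hpq.le) hgpq
    refine ⟨⟨g, hg, rfl⟩, ⟨mk2 {w | w ≤ g p} p q, mk2_mem (fun a b hba ha => le_trans hba ha) hpX hqX hpq.le, ?_⟩⟩
    funext w
    rcases hv w with h' | h' <;> simp only [comp_apply, h']
    · rw [mk2_of_mem (show g p ∈ {w | w ≤ g p} from le_refl _)]
    · rw [mk2_of_notMem (show g q ∉ {w | w ≤ g p} from not_le.2 hgpq')]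

lemma rank2_twoVal {f : X → X} (h : Rank2 X' f) {p1 p2 : X}
    (hp1 : p1 ∈ X') (hp2 : p2 ∈ X') (h12 : p1 < p2) : TwoValF f := by
  obtain ⟨hf, hnrz, hmin⟩ := h
  have hnc : ∃ t u, f t ≠ f u := by
    by_contra hc
    push_neg at hc
    apply hnrz
    rw [rz_iff_const hf hp1]
    exact ⟨f p1, funext fun t => hc t p1⟩
  obtain ⟨t, u, htu⟩ := hnc
  set a := min (f t) (f u) with ha
  set b := max (f t) (f u) with hb
  have hab : a < b := min_lt_max.2 htu
  have hwa : ∃ w, f w = a := by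
    rcases min_choice (f t) (f u) with h | h
    · exact ⟨t, by rw [ha]; exact h.symm⟩
    · exact ⟨u, by rw [ha]; exact h.symm⟩
  have hwb : ∃ w, f w = b := by
    rcases max_choice (f t) (f u) with h | h
    · exact ⟨t, by rw [hb]; exact h.symm⟩
    · exact ⟨u, by rw [hb]; exact h.symm⟩
  obtain ⟨x1, hx1⟩ := hwa
  obtain ⟨x2, hx2⟩ := hwb
  by_cases h2 : ∀ v, f v = a ∨ f v = b
  · exact ⟨a, b, hab, h2, ⟨x1, hx1⟩, ⟨x2, hx2⟩⟩
  push_neg at h2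
  obtain ⟨v, hva, hvb⟩ := h2
  exfalso
  -- three distinct values a < b, c := f v
  set c := f v with hc
  -- separator: threshold at m
  have sep : ∀ m : X, ∀ y1 y2 : X, f y1 ≤ m → ¬ f y2 ≤ m → ∀ z1 z2 : X,
      ¬ f z1 ≤ m → ¬ f z2 ≤ m → f z1 ≠ f z2 → False := by
    intro m y1 y2 hy1 hy2 z1 z2 hz1 hz2 hz
    set g := mk2 {w | w ≤ m} p1 p2 with hg
    have hgm : g ∈ OPR X' := mk2_mem (fun a b hba ha => le_trans hba ha) hp1 hp2 h12.le
    have hgf : g ∘ f ∈ OPR X' := opr_comp hf hgm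
    have hnrz2 : ¬ RZ X' (g ∘ f) := by
      rw [rz_iff_const hgf hp1]
      rintro ⟨d, hd⟩
      have e1 : g (f y1) = d := congrFun hd y1
      have e2 : g (f y2) = d := congrFun hd y2
      rw [hg, mk2_of_mem (show f y1 ∈ {w | w ≤ m} from hy1)] at e1
      rw [hg, mk2_of_notMem (show f y2 ∉ {w | w ≤ m} from hy2)] at e2
      exact absurd (e1.trans e2.symm ▸ h12) (lt_irrefl _)
    have hl := hmin g hgm hnrz2
    have := (lrel_fibers hl (t := z1) (u := z2)).2
    apply hz
    apply this
    simp only [comp_apply, hg]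
    rw [mk2_of_notMem (show f z1 ∉ {w | w ≤ m} from hz1),
        mk2_of_notMem (show f z2 ∉ {w | w ≤ m} from hz2)]
  rcases lt_or_gt_of_ne hva with h' | h'
  · -- c < a : threshold at c merges a,b
    exact sep c v x1 (le_of_eq rfl) (by rw [hx1]; exact not_le.2 h') x1 x2
      (by rw [hx1]; exact not_le.2 h') (by rw [hx2]; exact not_le.2 (h'.trans hab))
      (by rw [hx1, hx2]; exact ne_of_lt hab)
  · -- a < c : threshold at a merges c and b
    have hcb : c ≠ b := hvb
    exact sep a x1 v (le_of_eq hx1) (not_le.2 h') v x2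
      (not_le.2 h') (by rw [hx2]; exact not_le.2 hab)
      (by rw [hx2]; exact hcb)

end Rank2Char
section SetupSec

structure Setup (X Y : Type*) [LinearOrder X] [LinearOrder Y] (X' : Set X) (Y' : Set Y) where
  φ : (X → X) → (Y → Y)
  ψ : (Y → Y) → (X → X)
  θ : X → Y
  ρ : Y → X
  p1 : X
  p2 : X
  p3 : X
  hp1 : p1 ∈ X'
  hp2 : p2 ∈ X'
  hp3 : p3 ∈ X'
  h12 : p1 < p2
  h23 : p2 < p3
  q1 : Y
  q2 : Y
  q3 : Y
  hq1 : q1 ∈ Y'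
  hq2 : q2 ∈ Y'
  hq3 : q3 ∈ Y'
  hq12 : q1 < q2
  hq23 : q2 < q3
  maps : ∀ f ∈ OPR X', φ f ∈ OPR Y'
  maps' : ∀ g ∈ OPR Y', ψ g ∈ OPR X'
  left : ∀ f ∈ OPR X', ψ (φ f) = f
  right : ∀ g ∈ OPR Y', φ (ψ g) = g
  mult : ∀ f ∈ OPR X', ∀ g ∈ OPR X', φ (g ∘ f) = φ g ∘ φ f
  mult' : ∀ f ∈ OPR Y', ∀ g ∈ OPR Y', ψ (g ∘ f) = ψ g ∘ ψ f
  θmem : ∀ a ∈ X', θ a ∈ Y'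
  ρmem : ∀ b ∈ Y', ρ b ∈ X'
  ρθ : ∀ a ∈ X', ρ (θ a) = a
  θρ : ∀ b ∈ Y', θ (ρ b) = b
  θmono : ∀ a ∈ X', ∀ b ∈ X', a ≤ b → θ a ≤ θ b
  ρmono : ∀ a ∈ Y', ∀ b ∈ Y', a ≤ b → ρ a ≤ ρ b
  keyid : ∀ f ∈ OPR X', ∀ a ∈ X', φ f (θ a) = θ (f a)
  keyid' : ∀ g ∈ OPR Y', ∀ b ∈ Y', ψ g (ρ b) = ρ (g b)

variable {X Y : Type*} [LinearOrder X] [LinearOrder Y] {X' : Set X} {Y' : Set Y}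

def Setup.symm (σ : Setup X Y X' Y') : Setup Y X Y' X' where
  φ := σ.ψ
  ψ := σ.φ
  θ := σ.ρ
  ρ := σ.θ
  p1 := σ.q1
  p2 := σ.q2
  p3 := σ.q3
  hp1 := σ.hq1
  hp2 := σ.hq2
  hp3 := σ.hq3
  h12 := σ.hq12
  h23 := σ.hq23
  q1 := σ.p1
  q2 := σ.p2
  q3 := σ.p3
  hq1 := σ.hp1
  hq2 := σ.hp2
  hq3 := σ.hp3
  hq12 := σ.h12
  hq23 := σ.h23
  maps := σ.maps'
  maps' := σ.maps
  left := σ.right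
  right := σ.left
  mult := σ.mult'
  mult' := σ.mult
  θmem := σ.ρmem
  ρmem := σ.θmem
  ρθ := σ.θρ
  θρ := σ.ρθ
  θmono := σ.ρmono
  ρmono := σ.θmono
  keyid := σ.keyid'
  keyid' := σ.keyid

namespace Setup

variable (σ : Setup X Y X' Y')

lemma θlt {a b : X} (ha : a ∈ X') (hb : b ∈ X') (hab : a < b) : σ.θ a < σ.θ b := by
  refine lt_of_le_of_ne (σ.θmono a ha b hb hab.le) fun h => ?_
  have := congrArg σ.ρ h
  rw [σ.ρθ a ha, σ.ρθ b hb] at this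
  exact absurd (this ▸ hab) (lt_irrefl _)

lemma injφ {f f' : X → X} (hf : f ∈ OPR X') (hf' : f' ∈ OPR X') (h : σ.φ f = σ.φ f') :
    f = f' := by
  have := congrArg σ.ψ h
  rwa [σ.left f hf, σ.left f' hf'] at this

lemma rz_transport {f : X → X} (hf : f ∈ OPR X') : RZ Y' (σ.φ f) ↔ RZ X' f := by
  constructor
  · intro h g hg
    have h1 : σ.φ (f ∘ g) = σ.φ f ∘ σ.φ g := σ.mult g hg f hf
    have h2 : σ.φ f ∘ σ.φ g = σ.φ f := h (σ.φ g) (σ.maps g hg)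
    exact σ.injφ (opr_comp hg hf) hf (h1.trans h2)
  · intro h G hG
    have : σ.φ f ∘ G = σ.φ (f ∘ σ.ψ G) := by
      rw [σ.mult (σ.ψ G) (σ.maps' G hG) f hf, σ.right G hG]
    rw [this, h (σ.ψ G) (σ.maps' G hG)]

lemma lrel_transport {f f' : X → X} (hf : f ∈ OPR X') (hf' : f' ∈ OPR X')
    (h : Lrel X' f f') : Lrel Y' (σ.φ f) (σ.φ f') := by
  obtain ⟨⟨g, hg, hg'⟩, ⟨k, hk, hk'⟩⟩ := h
  constructor
  · exact ⟨σ.φ g, σ.maps g hg, by rw [← σ.mult f hf g hg, ← hg']⟩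
  · exact ⟨σ.φ k, σ.maps k hk, by rw [← σ.mult f' hf' k hk, ← hk']⟩

lemma rank2_transport {f : X → X} (h : Rank2 X' f) : Rank2 Y' (σ.φ f) := by
  obtain ⟨hf, hnrz, hmin⟩ := h
  refine ⟨σ.maps f hf, fun hr => hnrz ((σ.rz_transport hf).1 hr), ?_⟩
  intro G hG hnrz2
  have hcomp : G ∘ σ.φ f = σ.φ (σ.ψ G ∘ f) := by
    rw [σ.mult f hf (σ.ψ G) (σ.maps' G hG), σ.right G hG]
  rw [hcomp] at hnrz2 ⊢
  have hmem : σ.ψ G ∘ f ∈ OPR X' := opr_comp hf (σ.maps' G hG)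
  have : ¬ RZ X' (σ.ψ G ∘ f) := fun hr => hnrz2 ((σ.rz_transport hmem).2 hr)
  exact σ.lrel_transport hf hmem (hmin (σ.ψ G) (σ.maps' G hG) this)

include σ in
lemma twoVal_of_rank2 {f : X → X} (h : Rank2 X' f) : TwoValF f :=
  rank2_twoVal h σ.hp1 σ.hp2 σ.h12

/-- same cut implies Lrel, for two-valued members -/
lemma lrel_of_same_cut {f f' : X → X} (hf : f ∈ OPR X') (hf' : f' ∈ OPR X')
    (h2 : TwoValF f) (h2' : TwoValF f') (hcut : cutOf f = cutOf f') : Lrel X' f f' := by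
  obtain ⟨p, q, hpq, hv, ⟨t0, hp⟩, ⟨t1, hq⟩⟩ := h2
  obtain ⟨p', q', hpq', hv', ⟨t0', hp'⟩, ⟨t1', hq'⟩⟩ := h2'
  have hpX : p ∈ X' := hf.2 ⟨t0, hp⟩
  have hqX : q ∈ X' := hf.2 ⟨t1, hq⟩
  have hpX' : p' ∈ X' := hf'.2 ⟨t0', hp'⟩
  have hqX' : q' ∈ X' := hf'.2 ⟨t1', hq'⟩
  have hcm : ∀ t, t ∈ cutOf f ↔ f t = p := fun t => cut_mem_iff hpq hv ⟨t1, hq⟩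
  have hcm' : ∀ t, t ∈ cutOf f' ↔ f' t = p' := fun t => cut_mem_iff hpq' hv' ⟨t1', hq'⟩
  constructor
  · refine ⟨mk2 {w | w ≤ p} p' q', mk2_mem (fun a b hba ha => le_trans hba ha) hpX' hqX' hpq'.le, ?_⟩
    funext w
    simp only [comp_apply]
    by_cases hw : w ∈ cutOf f
    · rw [(hcm w).1 hw, mk2_of_mem (show p ∈ {w | w ≤ p} from le_refl _)]
      exact (hcm' w).1 (hcut ▸ hw)
    · have hfw : f w = q := by
        rcases hv w with h | h
        · exact absurd ((hcm w).2 h) hw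
        · exact h
      rw [hfw, mk2_of_notMem (show q ∉ {w | w ≤ p} from not_le.2 hpq)]
      have hw' : w ∉ cutOf f' := hcut ▸ hw
      rcases hv' w with h | h
      · exact absurd ((hcm' w).2 h) hw'
      · exact h
  · refine ⟨mk2 {w | w ≤ p'} p q, mk2_mem (fun a b hba ha => le_trans hba ha) hpX hqX hpq.le, ?_⟩
    funext w
    simp only [comp_apply]
    by_cases hw : w ∈ cutOf f'
    · rw [(hcm' w).1 hw, mk2_of_mem (show p' ∈ {w | w ≤ p'} from le_refl _)]
      exact (hcm w).1 (hcut.symm ▸ hw)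
    · have hfw : f' w = q' := by
        rcases hv' w with h | h
        · exact absurd ((hcm' w).2 h) hw
        · exact h
      rw [hfw, mk2_of_notMem (show q' ∉ {w | w ≤ p'} from not_le.2 hpq')]
      have hw' : w ∉ cutOf f := hcut.symm ▸ hw
      rcases hv w with h | h
      · exact absurd ((hcm w).2 h) hw'
      · exact h

lemma cut_welldef {f f' : X → X} (h : Rank2 X' f) (h' : Rank2 X' f')
    (hcut : cutOf f = cutOf f') : cutOf (σ.φ f) = cutOf (σ.φ f') := by
  have hl : Lrel X' f f' :=
    lrel_of_same_cut h.1 h'.1 (σ.twoVal_of_rank2 h) (σ.twoVal_of_rank2 h') hcut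
  have hl' := σ.lrel_transport h.1 h'.1 hl
  exact cut_of_fibers (σ.maps f h.1).1 (σ.maps f' h'.1).1 (fun t u => lrel_fibers hl')

end Setup

/-- cut of a composition of two-valued maps -/
lemma cut_comp {Y : Type*} [LinearOrder Y] {F G : Y → Y} (hG : TwoValF G)
    (hGF : TwoValF (G ∘ F)) : cutOf (G ∘ F) = F ⁻¹' (cutOf G) := by
  obtain ⟨m, M, hmM, hvG, _, _⟩ := hG
  obtain ⟨a, b, hab, hv, ⟨u0, hu0⟩, ⟨u1, hu1⟩⟩ := hGF
  have hma : a = m ∧ b = M := by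
    have ha' : a = m ∨ a = M := hu0 ▸ hvG (F u0)
    have hb' : b = m ∨ b = M := hu1 ▸ hvG (F u1)
    rcases ha' with h1 | h1 <;> rcases hb' with h2 | h2 <;> subst h1 <;> subst h2
    · exact absurd hab (lt_irrefl _)
    · exact ⟨rfl, rfl⟩
    · exact absurd (hab.trans hmM) (lt_irrefl _)
    · exact absurd hab (lt_irrefl _)
  ext t
  constructor
  · rintro ⟨u, hu⟩
    exact ⟨F u, hu⟩
  · intro ht
    obtain ⟨u, hu⟩ := ht
    refine ⟨u1, ?_⟩
    have h1 : G (F t) = m := by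
      rcases hvG (F t) with h | h
      · exact h
      · exfalso
        rcases hvG u with h' | h' <;> rw [h, h'] at hu
        · exact absurd (hmM.trans hu) (lt_irrefl _)
        · exact lt_irrefl _ hu
    have h2 : (G ∘ F) u1 = M := hu1.trans hma.2
    simp only [comp_apply] at h2 ⊢
    rw [h1, h2]
    exact hmM

end SetupSec
section ThSec

variable {X : Type*} [LinearOrder X]

lemma lowerset_total {A B : Set X} (hA : IsLowerSet A) (hB : IsLowerSet B) :
    A ⊆ B ∨ B ⊆ A := by
  by_contra h
  push_neg at h
  rw [Set.not_subset, Set.not_subset] at h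
  obtain ⟨⟨a, haA, haB⟩, ⟨b, hbB, hbA⟩⟩ := h
  rcases le_total a b with hab | hab
  · exact haB (hB hab hbB)
  · exact hbA (hA hab haA)

lemma twoval_cut_iff {f : X → X} (h2 : TwoValF f) {a b u v : X}
    (ha : f a = u) (hb : f b = v) (huv : u < v) {t : X} :
    t ∈ cutOf f ↔ f t = u := by
  obtain ⟨p, q, hpq, hv, _, _⟩ := h2
  have hne : u ≠ v := ne_of_lt huv
  have hu' : u = p ∨ u = q := ha ▸ hv a
  have hv' : v = p ∨ v = q := hb ▸ hv b
  have hval : ∀ s, f s = u ∨ f s = v := by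
    rcases hu' with h1 | h1 <;> rcases hv' with h2 | h2 <;> subst h1 <;> subst h2
    · exact absurd rfl hne
    · exact hv
    · intro s
      rcases hv s with h | h
      · exact Or.inr h
      · exact Or.inl h
    · exact absurd rfl hne
  exact cut_mem_iff huv hval ⟨b, hb⟩

namespace Setup

variable {Y : Type*} [LinearOrder Y] {X' : Set X} {Y' : Set Y} (σ : Setup X Y X' Y')

/-- The induced map on lower sets ("cuts"). -/
noncomputable def Th (A : Set X) : Set Y :=
  if A = ∅ then ∅ else if A = Set.univ then Set.univ else cutOf (σ.φ (mk2 A σ.p1 σ.p2))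

lemma th_empty : σ.Th ∅ = ∅ := by simp [Th]

lemma th_univ : σ.Th Set.univ = Set.univ := by
  haveI : Nonempty X := ⟨σ.p1⟩
  rw [Th, if_neg (by simp), if_pos rfl]

lemma th_eq {A : Set X} (h1 : A ≠ ∅) (h2 : A ≠ Set.univ) :
    σ.Th A = cutOf (σ.φ (mk2 A σ.p1 σ.p2)) := by
  rw [Th, if_neg h1, if_neg h2]

lemma mk2A_rank2 {A : Set X} (hA : IsLowerSet A) (h1 : A ≠ ∅) (h2 : A ≠ Set.univ) :
    Rank2 X' (mk2 A σ.p1 σ.p2) := by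
  obtain ⟨t0, ht0⟩ := Set.nonempty_iff_ne_empty.2 h1
  obtain ⟨t1, ht1⟩ := (Set.ne_univ_iff_exists_notMem A).1 h2
  refine twoVal_rank2 (mk2_mem hA σ.hp1 σ.hp2 σ.h12.le) ?_
  exact ⟨σ.p1, σ.p2, σ.h12, fun t => by
      by_cases h : t ∈ A
      · exact Or.inl (mk2_of_mem h)
      · exact Or.inr (mk2_of_notMem h),
    ⟨t0, mk2_of_mem ht0⟩, ⟨t1, mk2_of_notMem ht1⟩⟩

include σ in
lemma cut_proper_of_rank2 {f : X → X} (h : Rank2 X' f) :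
    IsLowerSet (cutOf f) ∧ cutOf f ≠ ∅ ∧ cutOf f ≠ Set.univ := by
  obtain ⟨p, q, hpq, hv, ⟨t0, hp⟩, ⟨t1, hq⟩⟩ := σ.twoVal_of_rank2 h
  have hcm : ∀ t, t ∈ cutOf f ↔ f t = p := fun t => cut_mem_iff hpq hv ⟨t1, hq⟩
  refine ⟨cutOf_lower h.1.1, ?_, ?_⟩
  · apply Set.nonempty_iff_ne_empty.1
    exact ⟨t0, (hcm t0).2 hp⟩
  · apply (Set.ne_univ_iff_exists_notMem _).2
    refine ⟨t1, fun ht => ?_⟩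
    rw [hcm t1, hq] at ht
    exact absurd (ht ▸ hpq) (lt_irrefl _)

lemma th_of_rank2 {f : X → X} (h : Rank2 X' f) : σ.Th (cutOf f) = cutOf (σ.φ f) := by
  obtain ⟨hlow, h1, h2⟩ := σ.cut_proper_of_rank2 h
  rw [σ.th_eq h1 h2]
  refine σ.cut_welldef (σ.mk2A_rank2 hlow h1 h2) h ?_
  rw [mk2_cutOf σ.h12 (Set.nonempty_iff_ne_empty.2 h1) h2]

lemma th_proper {A : Set X} (hA : IsLowerSet A) (h1 : A ≠ ∅) (h2 : A ≠ Set.univ) :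
    IsLowerSet (σ.Th A) ∧ σ.Th A ≠ ∅ ∧ σ.Th A ≠ Set.univ := by
  rw [σ.th_eq h1 h2]
  exact σ.symm.cut_proper_of_rank2 (σ.rank2_transport (σ.mk2A_rank2 hA h1 h2))

lemma th_inv {A : Set X} (hA : IsLowerSet A) : σ.symm.Th (σ.Th A) = A := by
  by_cases h1 : A = ∅
  · rw [h1, σ.th_empty, σ.symm.th_empty]
  by_cases h2 : A = Set.univ
  · rw [h2, σ.th_univ, σ.symm.th_univ]
  rw [σ.th_eq h1 h2]
  have hr : Rank2 X' (mk2 A σ.p1 σ.p2) := σ.mk2A_rank2 hA h1 h2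
  rw [σ.symm.th_of_rank2 (σ.rank2_transport hr)]
  show cutOf (σ.ψ (σ.φ _)) = A
  rw [σ.left _ hr.1, mk2_cutOf σ.h12 (Set.nonempty_iff_ne_empty.2 h1) h2]

/-- the crucial monotonicity of the cut map. -/
lemma th_mono {A A' : Set X} (hA : IsLowerSet A) (hA' : IsLowerSet A') (hsub : A ⊆ A') :
    σ.Th A ⊆ σ.Th A' := by
  by_cases h1 : A = ∅
  · rw [h1, σ.th_empty]; exact Set.empty_subset _
  by_cases h2' : A' = Set.univ
  · rw [h2', σ.th_univ]; exact Set.subset_univ _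
  have h2 : A ≠ Set.univ := by
    intro h
    exact h2' (Set.eq_univ_of_univ_subset (h ▸ hsub))
  have h1' : A' ≠ ∅ := by
    intro h
    rw [h, Set.subset_empty_iff] at hsub
    exact h1 hsub
  by_cases heq : A = A'
  · rw [heq]
  -- now both proper and A ⊊ A'
  obtain ⟨w, hwA', hwA⟩ : ∃ w, w ∈ A' ∧ w ∉ A := by
    by_contra h
    push_neg at h
    exact heq (Set.Subset.antisymm hsub h)
  set h3 : X → X := fun t => if t ∈ A then σ.p1 else if t ∈ A' then σ.p2 else σ.p3 with hh3
  have h3mem : h3 ∈ OPR X' := by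
    constructor
    · intro a b hab
      by_cases hb : b ∈ A
      · rw [hh3]; simp only
        rw [if_pos hb, if_pos (hA hab hb)]
      · by_cases hb' : b ∈ A'
        · rw [hh3]; simp only
          rw [if_pos hb', if_neg hb]
          by_cases ha : a ∈ A
          · rw [if_pos ha]; exact σ.h12.le
          · rw [if_neg ha, if_pos (hA' hab hb')]
        · rw [hh3]; simp only [if_neg hb, if_neg hb']
          by_cases ha : a ∈ A
          · rw [if_pos ha]; exact (σ.h12.trans σ.h23).le
          · rw [if_neg ha]
            by_cases ha' : a ∈ A'
            · rw [if_pos ha']; exact σ.h23.le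
            · rw [if_neg ha']
    · intro y hy
      obtain ⟨t, ht⟩ := hy
      rw [hh3] at ht; simp only at ht
      by_cases ha : t ∈ A
      · rw [if_pos ha] at ht; exact ht ▸ σ.hp1
      · rw [if_neg ha] at ht
        by_cases ha' : t ∈ A'
        · rw [if_pos ha'] at ht; exact ht ▸ σ.hp2
        · rw [if_neg ha'] at ht; exact ht ▸ σ.hp3
  set gl : X → X := mk2 {w | w ≤ σ.p1} σ.p1 σ.p2 with hgl
  set gh : X → X := mk2 {w | w ≤ σ.p2} σ.p1 σ.p2 with hgh
  have hglmem : gl ∈ OPR X' := mk2_mem (fun a b hba ha => le_trans hba ha) σ.hp1 σ.hp2 σ.h12.le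
  have hghmem : gh ∈ OPR X' := mk2_mem (fun a b hba ha => le_trans hba ha) σ.hp1 σ.hp2 σ.h12.le
  have hcl : gl ∘ h3 = mk2 A σ.p1 σ.p2 := by
    funext t
    simp only [comp_apply, hh3]
    by_cases ha : t ∈ A
    · rw [if_pos ha, mk2_of_mem ha, hgl,
        mk2_of_mem (show σ.p1 ∈ {w | w ≤ σ.p1} from le_refl _)]
    · rw [if_neg ha, mk2_of_notMem ha, hgl]
      by_cases ha' : t ∈ A'
      · rw [if_pos ha', mk2_of_notMem (show σ.p2 ∉ {w | w ≤ σ.p1} from not_le.2 σ.h12)]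
      · rw [if_neg ha',
          mk2_of_notMem (show σ.p3 ∉ {w | w ≤ σ.p1} from not_le.2 (σ.h12.trans σ.h23))]
  have hch : gh ∘ h3 = mk2 A' σ.p1 σ.p2 := by
    funext t
    simp only [comp_apply, hh3]
    by_cases ha : t ∈ A
    · rw [if_pos ha, mk2_of_mem (hsub ha), hgh,
        mk2_of_mem (show σ.p1 ∈ {w | w ≤ σ.p2} from σ.h12.le)]
    · rw [if_neg ha]
      by_cases ha' : t ∈ A'
      · rw [if_pos ha', mk2_of_mem ha', hgh,
          mk2_of_mem (show σ.p2 ∈ {w | w ≤ σ.p2} from le_refl _)]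
      · rw [if_neg ha', mk2_of_notMem ha', hgh,
          mk2_of_notMem (show σ.p3 ∉ {w | w ≤ σ.p2} from not_le.2 σ.h23)]
  -- rank-2 facts
  have hrA : Rank2 X' (mk2 A σ.p1 σ.p2) := σ.mk2A_rank2 hA h1 h2
  have hrA' : Rank2 X' (mk2 A' σ.p1 σ.p2) := σ.mk2A_rank2 hA' h1' h2'
  have hrgl : Rank2 X' gl := by
    rw [hgl]
    refine σ.mk2A_rank2 (fun a b hba ha => le_trans hba ha) ?_ ?_
    · exact Set.nonempty_iff_ne_empty.1 ⟨σ.p1, le_refl _⟩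
    · exact (Set.ne_univ_iff_exists_notMem _).2 ⟨σ.p2, not_le.2 σ.h12⟩
  have hrgh : Rank2 X' gh := by
    rw [hgh]
    refine σ.mk2A_rank2 (fun a b hba ha => le_trans hba ha) ?_ ?_
    · exact Set.nonempty_iff_ne_empty.1 ⟨σ.p1, σ.h12.le⟩
    · exact (Set.ne_univ_iff_exists_notMem _).2 ⟨σ.p3, not_le.2 σ.h23⟩
  -- pass to Y
  have hmultl : σ.φ (mk2 A σ.p1 σ.p2) = σ.φ gl ∘ σ.φ h3 := by
    rw [← hcl]; exact σ.mult h3 h3mem gl hglmem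
  have hmulth : σ.φ (mk2 A' σ.p1 σ.p2) = σ.φ gh ∘ σ.φ h3 := by
    rw [← hch]; exact σ.mult h3 h3mem gh hghmem
  have htvgl : TwoValF (σ.φ gl) := σ.symm.twoVal_of_rank2 (σ.rank2_transport hrgl)
  have htvgh : TwoValF (σ.φ gh) := σ.symm.twoVal_of_rank2 (σ.rank2_transport hrgh)
  have htvA : TwoValF (σ.φ gl ∘ σ.φ h3) := by
    rw [← hmultl]; exact σ.symm.twoVal_of_rank2 (σ.rank2_transport hrA)
  have htvA' : TwoValF (σ.φ gh ∘ σ.φ h3) := by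
    rw [← hmulth]; exact σ.symm.twoVal_of_rank2 (σ.rank2_transport hrA')
  -- value computations
  have e1 : σ.φ gl (σ.θ σ.p1) = σ.θ σ.p1 := by
    rw [σ.keyid gl hglmem σ.p1 σ.hp1, hgl,
      mk2_of_mem (show σ.p1 ∈ {w | w ≤ σ.p1} from le_refl _)]
  have e2 : σ.φ gl (σ.θ σ.p2) = σ.θ σ.p2 := by
    rw [σ.keyid gl hglmem σ.p2 σ.hp2, hgl,
      mk2_of_notMem (show σ.p2 ∉ {w | w ≤ σ.p1} from not_le.2 σ.h12)]
  have e3 : σ.φ gh (σ.θ σ.p2) = σ.θ σ.p1 := by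
    rw [σ.keyid gh hghmem σ.p2 σ.hp2, hgh,
      mk2_of_mem (show σ.p2 ∈ {w | w ≤ σ.p2} from le_refl _)]
  have e4 : σ.φ gh (σ.θ σ.p3) = σ.θ σ.p2 := by
    rw [σ.keyid gh hghmem σ.p3 σ.hp3, hgh,
      mk2_of_notMem (show σ.p3 ∉ {w | w ≤ σ.p2} from not_le.2 σ.h23)]
  have hθ12 : σ.θ σ.p1 < σ.θ σ.p2 := σ.θlt σ.hp1 σ.hp2 σ.h12
  -- membership facts
  have hin : σ.θ σ.p2 ∈ cutOf (σ.φ gh) := ⟨σ.θ σ.p3, by rw [e3, e4]; exact hθ12⟩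
  have hout : σ.θ σ.p2 ∉ cutOf (σ.φ gl) := by
    rw [twoval_cut_iff htvgl e1 e2 hθ12, e2]
    exact fun h => absurd (h ▸ hθ12) (lt_irrefl _)
  have hDsub : cutOf (σ.φ gl) ⊆ cutOf (σ.φ gh) := by
    rcases lowerset_total (cutOf_lower (σ.maps gl hglmem).1) (cutOf_lower (σ.maps gh hghmem).1)
      with h | h
    · exact h
    · intro t ht
      exact ((hout (h hin)).elim)
  -- conclude
  rw [σ.th_eq h1 h2, σ.th_eq h1' h2', hmultl, hmulth, cut_comp htvgl htvA, cut_comp htvgh htvA']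
  exact fun t ht => hDsub ht

end Setup

end ThSec
section TraceSec

variable {X Y : Type*} [LinearOrder X] [LinearOrder Y] {X' : Set X} {Y' : Set Y}

namespace Setup

variable (σ : Setup X Y X' Y')

lemma symm_symm : σ.symm.symm = σ := rfl

lemma trace_a {A : Set X} (hA : IsLowerSet A) {x0 x1 : X} (hx0 : x0 ∈ X') (hx0A : x0 ∈ A)
    (hx1 : x1 ∈ X') (hx1A : x1 ∉ A) {s : X} (hs : s ∈ X') :
    σ.θ s ∈ σ.Th A ↔ s ∈ A := by
  have h1 : A ≠ ∅ := Set.nonempty_iff_ne_empty.1 ⟨x0, hx0A⟩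
  have h2 : A ≠ Set.univ := (Set.ne_univ_iff_exists_notMem _).2 ⟨x1, hx1A⟩
  set f : X → X := mk2 A σ.p1 σ.p2 with hf
  have hrA : Rank2 X' f := σ.mk2A_rank2 hA h1 h2
  have hfmem : f ∈ OPR X' := hrA.1
  have e0 : σ.φ f (σ.θ x0) = σ.θ σ.p1 := by
    rw [σ.keyid f hfmem x0 hx0, hf, mk2_of_mem hx0A]
  have e1 : σ.φ f (σ.θ x1) = σ.θ σ.p2 := by
    rw [σ.keyid f hfmem x1 hx1, hf, mk2_of_notMem hx1A]
  have hθ12 : σ.θ σ.p1 < σ.θ σ.p2 := σ.θlt σ.hp1 σ.hp2 σ.h12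
  have htv : TwoValF (σ.φ f) := σ.symm.twoVal_of_rank2 (σ.rank2_transport hrA)
  rw [σ.th_eq h1 h2, ← hf, twoval_cut_iff htv e0 e1 hθ12, σ.keyid f hfmem s hs]
  constructor
  · intro h
    by_contra hsA
    rw [hf, mk2_of_notMem hsA] at h
    have := congrArg σ.ρ h
    rw [σ.ρθ _ σ.hp2, σ.ρθ _ σ.hp1] at this
    exact absurd (this ▸ σ.h12) (lt_irrefl _)
  · intro h
    rw [hf, mk2_of_mem h]

lemma trace {A : Set X} (hA : IsLowerSet A) (h1 : A ≠ ∅) (h2 : A ≠ Set.univ)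
    {s : X} (hs : s ∈ X') : σ.θ s ∈ σ.Th A ↔ s ∈ A := by
  have hLlow : IsLowerSet {t : X | t ≤ σ.p2} := fun a b hba ha => le_trans hba ha
  by_cases hin : ∃ x ∈ X', x ∈ A
  · by_cases hout : ∃ x ∈ X', x ∉ A
    · obtain ⟨x0, hx0, hx0A⟩ := hin
      obtain ⟨x1, hx1, hx1A⟩ := hout
      exact σ.trace_a hA hx0 hx0A hx1 hx1A hs
    · -- X' ⊆ A
      push_neg at hout
      have hsA : s ∈ A := hout s hs
      simp only [hsA, iff_true]
      by_contra hno
      obtain ⟨hBlow, hB1, hB2⟩ := σ.th_proper hA h1 h2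
      by_cases hy : ∃ y ∈ Y', y ∈ σ.Th A
      · obtain ⟨y, hy1, hy2⟩ := hy
        have := σ.symm.trace_a hBlow hy1 hy2 (σ.θmem s hs) hno (σ.θmem s hs)
        rw [σ.th_inv hA] at this
        show False
        rw [show σ.symm.θ = σ.ρ from rfl, σ.ρθ s hs] at this
        exact hno (this.1 hsA)
      · push_neg at hy
        have hL2 : σ.p2 ∈ X' := σ.hp2
        have hLA : {t : X | t ≤ σ.p2} ⊆ A := fun t ht => hA ht (hout σ.p2 hL2)
        have hsubTh := σ.th_mono hLlow hA hLA
        have hp2L : σ.θ σ.p2 ∈ σ.Th {t : X | t ≤ σ.p2} := by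
          rw [σ.trace_a hLlow σ.hp1 (show σ.p1 ∈ {t : X | t ≤ σ.p2} from σ.h12.le) σ.hp3
            (show σ.p3 ∉ {t : X | t ≤ σ.p2} from not_le.2 σ.h23) σ.hp2]
          exact le_refl _
        exact hy _ (σ.θmem _ σ.hp2) (hsubTh hp2L)
  · -- X' ∩ A = ∅
    push_neg at hin
    have hsA : s ∉ A := hin s hs
    simp only [hsA, iff_false]
    intro hyes
    obtain ⟨hBlow, hB1, hB2⟩ := σ.th_proper hA h1 h2
    by_cases hy : ∃ y ∈ Y', y ∉ σ.Th A
    · obtain ⟨y, hy1, hy2⟩ := hy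
      have := σ.symm.trace_a hBlow (σ.θmem s hs) hyes hy1 hy2 (σ.θmem s hs)
      rw [σ.th_inv hA] at this
      rw [show σ.symm.θ = σ.ρ from rfl, σ.ρθ s hs] at this
      exact hsA (this.2 hyes)
    · push_neg at hy
      have hAL : A ⊆ {t : X | t ≤ σ.p2} := by
        intro t ht
        by_contra hcon
        exact hin σ.p2 σ.hp2 (hA (not_le.1 hcon).le ht)
      have hsubTh := σ.th_mono hA hLlow hAL
      have hp3L : σ.θ σ.p3 ∉ σ.Th {t : X | t ≤ σ.p2} := by
        rw [σ.trace_a hLlow σ.hp1 (show σ.p1 ∈ {t : X | t ≤ σ.p2} from σ.h12.le) σ.hp3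
          (show σ.p3 ∉ {t : X | t ≤ σ.p2} from not_le.2 σ.h23) σ.hp3]
        exact not_le.2 σ.h23
      exact hp3L (hsubTh (hy _ (σ.θmem _ σ.hp3)))

end Setup

end TraceSec
section PointSec

variable {X Y : Type*} [LinearOrder X] [LinearOrder Y] {X' : Set X} {Y' : Set Y}

lemma lower_between {X : Type*} [LinearOrder X] {D : Set X} {x : X} (hD : IsLowerSet D)
    (h1 : Set.Iio x ⊆ D) (h2 : D ⊆ Set.Iic x) : D = Set.Iio x ∨ D = Set.Iic x := by
  by_cases hx : x ∈ D
  · right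
    exact Set.Subset.antisymm h2 fun t ht => hD ht hx
  · left
    refine Set.Subset.antisymm (fun t ht => ?_) h1
    rcases lt_or_eq_of_le (h2 ht) with h | h
    · exact h
    · exact absurd (h ▸ ht) hx

namespace Setup

variable (σ : Setup X Y X' Y')

lemma th_lower {A : Set X} (hA : IsLowerSet A) : IsLowerSet (σ.Th A) := by
  by_cases h1 : A = ∅
  · rw [h1, σ.th_empty]; intro a b _ h; exact h
  by_cases h2 : A = Set.univ
  · rw [h2, σ.th_univ]; intro a b _ _; trivial
  exact (σ.th_proper hA h1 h2).1

lemma th_invc {A : Set Y} (hA : IsLowerSet A) : σ.Th (σ.symm.Th A) = A := by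
  have := σ.symm.th_inv hA
  rwa [σ.symm_symm] at this

lemma point_diff (x : X) : ∃! y : Y, y ∈ σ.Th (Set.Iic x) \ σ.Th (Set.Iio x) := by
  have hlow1 : IsLowerSet (Set.Iio x) := fun a b hba ha => lt_of_le_of_lt hba ha
  have hlow2 : IsLowerSet (Set.Iic x) := fun a b hba ha => le_trans hba ha
  have hsub : σ.Th (Set.Iio x) ⊆ σ.Th (Set.Iic x) :=
    σ.th_mono hlow1 hlow2 fun t (ht : t < x) => ht.le
  have hne : σ.Th (Set.Iio x) ≠ σ.Th (Set.Iic x) := by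
    intro h
    have h' := congrArg σ.symm.Th h
    rw [σ.th_inv hlow1, σ.th_inv hlow2] at h'
    have : x ∈ Set.Iio x := h' ▸ Set.mem_Iic.2 (le_refl x)
    exact lt_irrefl x this
  have hex : ∃ y, y ∈ σ.Th (Set.Iic x) \ σ.Th (Set.Iio x) := by
    by_contra h
    push_neg at h
    exact hne (Set.Subset.antisymm hsub fun t ht => by_contra fun hc => (h t) ⟨ht, hc⟩)
  have main : ∀ y1 y2 : Y, y1 < y2 → y1 ∈ σ.Th (Set.Iic x) \ σ.Th (Set.Iio x) →
      y2 ∈ σ.Th (Set.Iic x) \ σ.Th (Set.Iio x) → False := by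
    intro y1 y2 h12 hm1 hm2
    have hBlow : IsLowerSet (σ.Th (Set.Iio x)) := σ.th_lower hlow1
    have hB'low : IsLowerSet (σ.Th (Set.Iic x)) := σ.th_lower hlow2
    set C := σ.Th (Set.Iic x) ∩ Set.Iio y2 with hC
    have hClow : IsLowerSet C := fun a b hba ha =>
      ⟨hB'low hba ha.1, lt_of_le_of_lt hba ha.2⟩
    have hBC : σ.Th (Set.Iio x) ⊆ C := by
      intro b hb
      refine ⟨hsub hb, ?_⟩
      by_contra hc
      exact hm2.2 (hBlow (not_lt.1 hc) hb)
    have hCB' : C ⊆ σ.Th (Set.Iic x) := fun t ht => ht.1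
    have hD1 : Set.Iio x ⊆ σ.symm.Th C := by
      rw [← σ.th_inv hlow1]
      exact σ.symm.th_mono hBlow hClow hBC
    have hD2 : σ.symm.Th C ⊆ Set.Iic x := by
      rw [← σ.th_inv hlow2]
      exact σ.symm.th_mono hClow hB'low hCB'
    rcases lower_between (σ.symm.th_lower hClow) hD1 hD2 with h | h
    · have h' := congrArg σ.Th h
      rw [σ.th_invc hClow] at h'
      exact hm1.2 (h' ▸ ⟨hm1.1, h12⟩)
    · have h' := congrArg σ.Th h
      rw [σ.th_invc hClow] at h'
      have : y2 ∈ C := h' ▸ hm2.1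
      exact absurd this.2 (lt_irrefl y2)
  obtain ⟨y, hy⟩ := hex
  refine ⟨y, hy, fun y' hy' => ?_⟩
  by_contra hne'
  rcases lt_or_gt_of_ne hne' with h | h
  · exact main y' y h hy' hy
  · exact main y y' h hy hy'

noncomputable def pt (x : X) : Y := (σ.point_diff x).exists.choose

lemma pt_mem (x : X) : σ.pt x ∈ σ.Th (Set.Iic x) \ σ.Th (Set.Iio x) :=
  (σ.point_diff x).exists.choose_spec

lemma pt_eq {x : X} {y : Y} (h : y ∈ σ.Th (Set.Iic x) \ σ.Th (Set.Iio x)) : σ.pt x = y :=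
  ((σ.point_diff x).unique (σ.pt_mem x) h).symm ▸ rfl

lemma pt_strictMono : StrictMono σ.pt := by
  intro a b hab
  have hlow : IsLowerSet (Set.Iio b) := fun s t hts ht => lt_of_le_of_lt hts ht
  have h1 : σ.pt a ∈ σ.Th (Set.Iio b) := by
    have hsub : σ.Th (Set.Iic a) ⊆ σ.Th (Set.Iio b) :=
      σ.th_mono (fun s t hts ht => le_trans hts ht) hlow fun t (ht : t ≤ a) => lt_of_le_of_lt ht hab
    exact hsub (σ.pt_mem a).1
  have h2 : σ.pt b ∉ σ.Th (Set.Iio b) := (σ.pt_mem b).2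
  by_contra hc
  exact h2 (σ.th_lower hlow (not_lt.1 hc) h1)

lemma pt_surjective : Function.Surjective σ.pt := by
  intro y
  refine ⟨σ.symm.pt y, ?_⟩
  set x := σ.symm.pt y with hx
  have hmem := σ.symm.pt_mem y
  have hAlow : IsLowerSet (σ.symm.Th (Set.Iio y)) := σ.symm.th_lower
    (fun s t hts ht => lt_of_le_of_lt hts ht)
  have hA'low : IsLowerSet (σ.symm.Th (Set.Iic y)) := σ.symm.th_lower
    (fun s t hts ht => le_trans hts ht)
  have hsub : σ.symm.Th (Set.Iio y) ⊆ σ.symm.Th (Set.Iic y) :=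
    σ.symm.th_mono (fun s t hts ht => lt_of_le_of_lt hts ht)
      (fun s t hts ht => le_trans hts ht) (fun t (ht : t < y) => ht.le)
  -- the difference of the pulled-back cuts is exactly {x}
  have huniq := σ.symm.point_diff y
  have hAIio : σ.symm.Th (Set.Iio y) = Set.Iio x := by
    apply Set.Subset.antisymm
    · intro t ht
      by_contra hc
      exact hmem.2 (hAlow (not_lt.1 hc) ht)
    · intro t ht
      by_cases htA : t ∈ σ.symm.Th (Set.Iio y)
      · exact htA
      · exfalso
        have : t ∈ σ.symm.Th (Set.Iic y) := hA'low ht.le hmem.1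
        have heq := huniq.unique ⟨this, htA⟩ ⟨hmem.1, hmem.2⟩
        rw [← hx] at heq
        exact absurd (heq ▸ ht) (lt_irrefl x)
  have hAIic : σ.symm.Th (Set.Iic y) = Set.Iic x := by
    apply Set.Subset.antisymm
    · intro t ht
      by_cases htA : t ∈ σ.symm.Th (Set.Iio y)
      · have h' : t < x := by rw [hAIio] at htA; exact htA
        exact h'.le
      · have heq := huniq.unique ⟨ht, htA⟩ ⟨hmem.1, hmem.2⟩
        rw [← hx] at heq
        exact heq.le
    · intro t ht
      rcases lt_or_eq_of_le ht with h | h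
      · exact hsub (hAIio ▸ h)
      · exact h ▸ hmem.1
  apply σ.pt_eq
  constructor
  · rw [← hAIic]
    have h := σ.th_invc (A := Set.Iic y) (fun s t hts ht => le_trans hts ht)
    rw [h]
    exact Set.mem_Iic.2 (le_refl y)
  · rw [← hAIio]
    have h := σ.th_invc (A := Set.Iio y) (fun s t hts ht => lt_of_le_of_lt hts ht)
    rw [h]
    exact fun hc => lt_irrefl y hc

lemma pt_theta {r : X} (hr : r ∈ X') : σ.pt r = σ.θ r := by
  apply σ.pt_eq
  constructor
  · by_cases h2 : Set.Iic r = Set.univ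
    · rw [h2, σ.th_univ]; trivial
    · have h := σ.trace (A := Set.Iic r) (fun s t hts ht => le_trans hts ht)
        (Set.nonempty_iff_ne_empty.1 ⟨r, le_refl r⟩) h2 hr
      rw [h]
      exact Set.mem_Iic.2 (le_refl r)
  · by_cases h1 : Set.Iio r = ∅
    · rw [h1, σ.th_empty]; exact fun h => h
    · have h := σ.trace (A := Set.Iio r) (fun s t hts ht => lt_of_le_of_lt hts ht) h1
        ((Set.ne_univ_iff_exists_notMem _).2 ⟨r, lt_irrefl r⟩) hr
      rw [h]
      exact fun hc => lt_irrefl r hc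

include σ in
lemma main_iso : ∃ θf : X ≃ Y, (∀ a b : X, a ≤ b ↔ θf a ≤ θf b) ∧ θf '' X' = Y' := by
  have hbij : Function.Bijective σ.pt := ⟨σ.pt_strictMono.injective, σ.pt_surjective⟩
  refine ⟨Equiv.ofBijective σ.pt hbij, fun a b => ?_, ?_⟩
  · constructor
    · intro h
      exact (σ.pt_strictMono.le_iff_le).2 h
    · intro h
      exact (σ.pt_strictMono.le_iff_le).1 h
  · apply Set.Subset.antisymm
    · rintro y ⟨r, hr, rfl⟩
      show σ.pt r ∈ Y'
      rw [σ.pt_theta hr]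
      exact σ.θmem r hr
    · intro y hy
      refine ⟨σ.ρ y, σ.ρmem y hy, ?_⟩
      show σ.pt (σ.ρ y) = y
      rw [σ.pt_theta (σ.ρmem y hy), σ.θρ y hy]

end Setup
end PointSec
section Aux

lemma exists_triple {X : Type*} [LinearOrder X] {X' : Set X}
    (h3 : 3 ≤ Cardinal.mk ↥X') :
    ∃ p1 p2 p3 : X, p1 ∈ X' ∧ p2 ∈ X' ∧ p3 ∈ X' ∧ p1 < p2 ∧ p2 < p3 := by
  have hne : Nonempty ↥X' := by
    apply Cardinal.mk_ne_zero_iff.1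
    intro h
    rw [h] at h3
    exact absurd (lt_of_lt_of_le (by norm_num) h3) (lt_irrefl _)
  obtain ⟨x⟩ := hne
  obtain ⟨z, hz1, -⟩ := Cardinal.three_le h3 x x
  obtain ⟨w, hw1, hw2⟩ := Cardinal.three_le h3 x z
  have hxz : (x : X) ≠ (z : X) := fun h => hz1 (Subtype.ext h).symm
  have hxw : (w : X) ≠ (x : X) := fun h => hw1 (Subtype.ext h)
  have hzw : (w : X) ≠ (z : X) := fun h => hw2 (Subtype.ext h)
  -- sort the three distinct elements a := x, b := z, c := w
  set a := (x : X); set b := (z : X); set c := (w : X)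
  have ha : a ∈ X' := x.2
  have hb : b ∈ X' := z.2
  have hc : c ∈ X' := w.2
  clear_value a b c
  rcases lt_or_gt_of_ne hxz with h1 | h1
  · rcases lt_trichotomy c a with h2 | h2 | h2
    · exact ⟨c, a, b, hc, ha, hb, h2, h1⟩
    · exact absurd h2 hxw
    · rcases lt_trichotomy c b with h3' | h3' | h3'
      · exact ⟨a, c, b, ha, hc, hb, h2, h3'⟩
      · exact absurd h3' hzw
      · exact ⟨a, b, c, ha, hb, hc, h1, h3'⟩
  · rcases lt_trichotomy c b with h2 | h2 | h2
    · exact ⟨c, b, a, hc, hb, ha, h2, h1⟩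
    · exact absurd h2 hzw
    · rcases lt_trichotomy c a with h3' | h3' | h3'
      · exact ⟨b, c, a, hb, hc, ha, h2, h3'⟩
      · exact absurd h3' hxw
      · exact ⟨b, a, c, hb, ha, hc, h1, h3'⟩

lemma mono_or_anti {X Y : Type*} [LinearOrder X] [LinearOrder Y] {X' : Set X} {θ : X → Y}
    (hinj : ∀ a ∈ X', ∀ b ∈ X', θ a = θ b → a = b)
    (hbtw : ∀ a ∈ X', ∀ b ∈ X', ∀ c ∈ X', a < b → b < c →
      (θ a < θ b ∧ θ b < θ c) ∨ (θ c < θ b ∧ θ b < θ a)) :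
    (∀ a ∈ X', ∀ b ∈ X', a ≤ b → θ a ≤ θ b) ∨
    (∀ a ∈ X', ∀ b ∈ X', a ≤ b → θ b ≤ θ a) := by
  by_cases hex : ∃ u ∈ X', ∃ v ∈ X', u < v
  · obtain ⟨u, hu, v, hv, huv⟩ := hex
    have left_step : ∀ a ∈ X', ∀ b ∈ X', ∀ b' ∈ X', a < b → a < b' →
        (θ a < θ b ↔ θ a < θ b') := by
      have half : ∀ a ∈ X', ∀ b ∈ X', ∀ b' ∈ X', a < b → b < b' →
          (θ a < θ b ↔ θ a < θ b') := by
        intro a ha b hb b' hb' hab hbb'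
        rcases hbtw a ha b hb b' hb' hab hbb' with ⟨h1, h2⟩ | ⟨h1, h2⟩
        · exact iff_of_true h1 (h1.trans h2)
        · exact iff_of_false (not_lt.2 h2.le) (not_lt.2 (h1.trans h2).le)
      intro a ha b hb b' hb' hab hab'
      rcases lt_trichotomy b b' with h | h | h
      · exact half a ha b hb b' hb' hab h
      · rw [h]
      · exact (half a ha b' hb' b hb hab' h).symm
    have right_step : ∀ a ∈ X', ∀ a' ∈ X', ∀ b ∈ X', a < b → a' < b →
        (θ a < θ b ↔ θ a' < θ b) := by
      have half : ∀ a ∈ X', ∀ a' ∈ X', ∀ b ∈ X', a < a' → a' < b →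
          (θ a < θ b ↔ θ a' < θ b) := by
        intro a ha a' ha' b hb haa' ha'b
        rcases hbtw a ha a' ha' b hb haa' ha'b with ⟨h1, h2⟩ | ⟨h1, h2⟩
        · exact iff_of_true (h1.trans h2) h2
        · exact iff_of_false (not_lt.2 (h1.trans h2).le) (not_lt.2 h1.le)
      intro a ha a' ha' b hb hab ha'b
      rcases lt_trichotomy a a' with h | h | h
      · exact half a ha a' ha' b hb h ha'b
      · rw [h]
      · exact (half a' ha' a ha b hb h hab).symm
    have claim : ∀ c ∈ X', ∀ d ∈ X', c < d → (θ c < θ d ↔ θ u < θ v) := by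
      intro c hc d hd hcd
      have hm : min u c ∈ X' := by
        rcases min_choice u c with h | h <;> rw [h]
        · exact hu
        · exact hc
      have hM : max v d ∈ X' := by
        rcases max_choice v d with h | h <;> rw [h]
        · exact hv
        · exact hd
      have e1 : θ u < θ v ↔ θ (min u c) < θ v := by
        rcases eq_or_lt_of_le (min_le_left u c) with h | h
        · rw [h]
        · exact right_step u hu (min u c) hm v hv huv (h.trans huv)
      have e2 : θ (min u c) < θ v ↔ θ (min u c) < θ (max v d) := by
        rcases eq_or_lt_of_le (le_max_left v d) with h | h
        · rw [← h]
        · exact left_step (min u c) hm v hv (max v d) hM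
            (lt_of_le_of_lt (min_le_left u c) huv)
            ((lt_of_le_of_lt (min_le_left u c) huv).trans h)
      have e3 : θ c < θ d ↔ θ (min u c) < θ d := by
        rcases eq_or_lt_of_le (min_le_right u c) with h | h
        · rw [h]
        · exact right_step c hc (min u c) hm d hd hcd (h.trans hcd)
      have e4 : θ (min u c) < θ d ↔ θ (min u c) < θ (max v d) := by
        rcases eq_or_lt_of_le (le_max_right v d) with h | h
        · rw [← h]
        · exact left_step (min u c) hm d hd (max v d) hM
            (lt_of_le_of_lt (min_le_right u c) hcd)
            ((lt_of_le_of_lt (min_le_right u c) hcd).trans h)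
      rw [e3, e4, e1, e2]
    have hne : θ u ≠ θ v := fun h => absurd (hinj u hu v hv h ▸ huv) (lt_irrefl _)
    rcases lt_or_gt_of_ne hne with hdir | hdir
    · left
      intro a ha b hb hab
      rcases eq_or_lt_of_le hab with h | h
      · rw [h]
      · exact ((claim a ha b hb h).2 hdir).le
    · right
      intro a ha b hb hab
      rcases eq_or_lt_of_le hab with h | h
      · rw [h]
      · refine le_of_not_gt fun hc => ?_
        exact absurd ((claim a ha b hb h).1 hc) (not_lt.2 hdir.le)
  · push_neg at hex
    left
    intro a ha b hb hab
    rcases eq_or_lt_of_le hab with h | h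
    · rw [h]
    · exact absurd h (not_lt.2 (hex a ha b hb))

lemma opr_dual {Y : Type*} [LinearOrder Y] (Y' : Set Y) :
    OPR (X := Yᵒᵈ) (Y' : Set Yᵒᵈ) = (OPR Y' : Set (Y → Y)) := by
  ext f
  constructor
  · rintro ⟨hm, hr⟩
    exact ⟨fun a b hab => hm (a := b) (b := a) hab, hr⟩
  · rintro ⟨hm, hr⟩
    exact ⟨fun a b hab => hm (a := b) (b := a) hab, hr⟩

end Aux
section MainSec

variable {X Y : Type*} [LinearOrder X] [LinearOrder Y]

lemma conj_mem {X' : Set X} {Y' : Set Y} (θ : X ≃ Y)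
    (hmono : (∀ a b : X, a ≤ b ↔ θ a ≤ θ b) ∨ (∀ a b : X, a ≤ b ↔ θ b ≤ θ a))
    (himg : θ '' X' = Y') {f : X → X} (hf : f ∈ OPR X') : (θ ∘ f ∘ θ.symm) ∈ OPR Y' := by
  constructor
  · intro a b hab
    show θ (f (θ.symm a)) ≤ θ (f (θ.symm b))
    rcases hmono with hm | hm
    · have h1 : θ.symm a ≤ θ.symm b := by
        rw [hm (θ.symm a) (θ.symm b), Equiv.apply_symm_apply, Equiv.apply_symm_apply] at *
        exact hab
      exact (hm _ _).1 (hf.1 h1)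
    · have h1 : θ.symm b ≤ θ.symm a := by
        rw [hm (θ.symm b) (θ.symm a), Equiv.apply_symm_apply, Equiv.apply_symm_apply] at *
        exact hab
      exact (hm _ _).1 (hf.1 h1)
  · rintro y ⟨t, rfl⟩
    have hx : f (θ.symm t) ∈ X' := hf.2 ⟨θ.symm t, rfl⟩
    rw [← himg]
    exact ⟨_, hx, rfl⟩

lemma easy_direction {X' : Set X} {Y' : Set Y} (θ : X ≃ Y)
    (hmono : (∀ a b : X, a ≤ b ↔ θ a ≤ θ b) ∨ (∀ a b : X, a ≤ b ↔ θ b ≤ θ a))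
    (himg : θ '' X' = Y') : IsSgIso X' Y' (fun f => θ ∘ f ∘ θ.symm) := by
  have himg' : θ.symm '' Y' = X' := by
    rw [← himg, Equiv.symm_image_image]
  have hmono' : (∀ a b : Y, a ≤ b ↔ θ.symm a ≤ θ.symm b) ∨
      (∀ a b : Y, a ≤ b ↔ θ.symm b ≤ θ.symm a) := by
    rcases hmono with hm | hm
    · left
      intro a b
      have := hm (θ.symm a) (θ.symm b)
      rw [Equiv.apply_symm_apply, Equiv.apply_symm_apply] at this
      exact this.symm
    · right
      intro a b
      have := hm (θ.symm b) (θ.symm a)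
      rw [Equiv.apply_symm_apply, Equiv.apply_symm_apply] at this
      exact this.symm
  refine ⟨⟨fun f hf => conj_mem θ hmono himg hf, ?_, ?_⟩, ?_⟩
  · intro f hf g hg h
    funext x
    have := congrFun h (θ x)
    simp only [comp_apply, Equiv.symm_apply_apply] at this
    exact θ.injective this
  · intro g hg
    refine ⟨θ.symm ∘ g ∘ θ, ?_, ?_⟩
    · have := conj_mem θ.symm hmono' himg' hg
      rwa [Equiv.symm_symm] at this
    · funext y
      simp only [comp_apply, Equiv.apply_symm_apply]
  · intro f hf g hg
    funext y
    simp only [comp_apply, Equiv.symm_apply_apply]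

lemma forward (X' : Set X) (Y' : Set Y)
    (h3X : 3 ≤ Cardinal.mk ↥X') (h3Y : 3 ≤ Cardinal.mk ↥Y')
    (φ : (X → X) → (Y → Y)) (hφ : IsSgIso X' Y' φ) :
    ∃ θ : X ≃ Y, ((∀ a b : X, a ≤ b ↔ θ a ≤ θ b) ∨ (∀ a b : X, a ≤ b ↔ θ b ≤ θ a)) ∧
      θ '' X' = Y' := by
  obtain ⟨hbij, hmult⟩ := hφ
  obtain ⟨p1, p2, p3, hp1, hp2, hp3, h12, h23⟩ := exists_triple h3X
  obtain ⟨w1, w2, w3, hw1, hw2, hw3, hw12, hw23⟩ := exists_triple h3Y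
  haveI : Nonempty (X → X) := ⟨id⟩
  set ψ := Function.invFunOn φ (OPR X') with hψdef
  have hinv := hbij.invOn_invFunOn
  have left : ∀ f ∈ OPR X', ψ (φ f) = f := fun f hf => hinv.1 hf
  have right : ∀ g ∈ OPR Y', φ (ψ g) = g := fun g hg => hinv.2 hg
  have maps : ∀ f ∈ OPR X', φ f ∈ OPR Y' := fun f hf => hbij.mapsTo hf
  have maps' : ∀ g ∈ OPR Y', ψ g ∈ OPR X' := by
    intro g hg
    obtain ⟨f, hf, hfg⟩ := hbij.surjOn hg
    exact Function.invFunOn_mem ⟨f, hf, hfg⟩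
  have mult' : ∀ F ∈ OPR Y', ∀ G ∈ OPR Y', ψ (G ∘ F) = ψ G ∘ ψ F := by
    intro F hF G hG
    have h1 : φ (ψ G ∘ ψ F) = G ∘ F := by
      rw [hmult (ψ F) (maps' F hF) (ψ G) (maps' G hG), right F hF, right G hG]
    have h2 : ψ (φ (ψ G ∘ ψ F)) = ψ G ∘ ψ F :=
      left _ (opr_comp (maps' F hF) (maps' G hG))
    rw [← h1, h2]
  -- constants go to constants
  have hconst : ∀ a, a ∈ X' → ∃ b, b ∈ Y' ∧
      φ (Function.const X a) = Function.const Y b := by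
    intro a ha
    have hmem : Function.const X a ∈ OPR X' := const_mem ha
    have hrz : RZ Y' (φ (Function.const X a)) := by
      intro G hG
      have h1 : φ (Function.const X a) ∘ G = φ (Function.const X a ∘ ψ G) := by
        rw [hmult (ψ G) (maps' G hG) _ hmem, right G hG]
      rw [h1]
      rfl
    obtain ⟨b, hb⟩ := (rz_iff_const (maps _ hmem) hw1).1 hrz
    refine ⟨b, ?_, hb⟩
    exact (maps _ hmem).2 ⟨w1, by rw [hb]; rfl⟩
  have hconst' : ∀ b, b ∈ Y' → ∃ a, a ∈ X' ∧
      ψ (Function.const Y b) = Function.const X a := by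
    intro b hb
    have hmem : Function.const Y b ∈ OPR Y' := const_mem hb
    have hrz : RZ X' (ψ (Function.const Y b)) := by
      intro g hg
      have h1 : ψ (Function.const Y b) ∘ g = ψ (Function.const Y b ∘ φ g) := by
        rw [mult' (φ g) (maps g hg) _ hmem, left g hg]
      rw [h1]
      rfl
    obtain ⟨a, ha⟩ := (rz_iff_const (maps' _ hmem) hp1).1 hrz
    refine ⟨a, ?_, ha⟩
    exact (maps' _ hmem).2 ⟨p1, by rw [ha]; rfl⟩
  classical
  set θ : X → Y := fun a => if h : a ∈ X' then (hconst a h).choose else w1 with hθdef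
  set ρ : Y → X := fun b => if h : b ∈ Y' then (hconst' b h).choose else p1 with hρdef
  have hθmem : ∀ a ∈ X', θ a ∈ Y' := by
    intro a ha
    rw [hθdef]; simp only [dif_pos ha]
    exact (hconst a ha).choose_spec.1
  have hρmem : ∀ b ∈ Y', ρ b ∈ X' := by
    intro b hb
    rw [hρdef]; simp only [dif_pos hb]
    exact (hconst' b hb).choose_spec.1
  have hθspec : ∀ a ∈ X', φ (Function.const X a) = Function.const Y (θ a) := by
    intro a ha
    rw [hθdef]; simp only [dif_pos ha]
    exact (hconst a ha).choose_spec.2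
  have hρspec : ∀ b ∈ Y', ψ (Function.const Y b) = Function.const X (ρ b) := by
    intro b hb
    rw [hρdef]; simp only [dif_pos hb]
    exact (hconst' b hb).choose_spec.2
  have hρθ : ∀ a ∈ X', ρ (θ a) = a := by
    intro a ha
    have h1 : ψ (Function.const Y (θ a)) = Function.const X a := by
      rw [← hθspec a ha, left _ (const_mem ha)]
    rw [hρspec _ (hθmem a ha)] at h1
    exact congrFun h1 p1
  have hθρ : ∀ b ∈ Y', θ (ρ b) = b := by
    intro b hb
    have h1 : φ (Function.const X (ρ b)) = Function.const Y b := by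
      rw [← hρspec b hb, right _ (const_mem hb)]
    rw [hθspec _ (hρmem b hb)] at h1
    exact congrFun h1 w1
  have keyid : ∀ f ∈ OPR X', ∀ a ∈ X', φ f (θ a) = θ (f a) := by
    intro f hf a ha
    have hfa : f a ∈ X' := hf.2 ⟨a, rfl⟩
    have h1 : φ (f ∘ Function.const X a) = φ f ∘ φ (Function.const X a) :=
      hmult (Function.const X a) (const_mem ha) f hf
    have h2 : f ∘ Function.const X a = Function.const X (f a) := rfl
    rw [h2, hθspec _ hfa, hθspec a ha] at h1
    exact (congrFun h1 w1).symm
  have keyid' : ∀ g ∈ OPR Y', ∀ b ∈ Y', ψ g (ρ b) = ρ (g b) := by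
    intro g hg b hb
    have hgb : g b ∈ Y' := hg.2 ⟨b, rfl⟩
    have h1 : ψ (g ∘ Function.const Y b) = ψ g ∘ ψ (Function.const Y b) :=
      mult' (Function.const Y b) (const_mem hb) g hg
    have h2 : g ∘ Function.const Y b = Function.const Y (g b) := rfl
    rw [h2, hρspec _ hgb, hρspec b hb] at h1
    exact (congrFun h1 p1).symm
  have hinjθ : ∀ a ∈ X', ∀ b ∈ X', θ a = θ b → a = b := by
    intro a ha b hb h
    have := congrArg ρ h
    rwa [hρθ a ha, hρθ b hb] at this
  -- betweenness is preserved
  have hbtw : ∀ a ∈ X', ∀ b ∈ X', ∀ c ∈ X', a < b → b < c →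
      (θ a < θ b ∧ θ b < θ c) ∨ (θ c < θ b ∧ θ b < θ a) := by
    intro a ha b hb c hc hab hbc
    have ybtw : ∀ G ∈ OPR Y', G (θ a) = G (θ c) → G (θ b) = G (θ a) := by
      intro G hG h
      have hval : ∀ x ∈ X', G (θ x) = θ (ψ G x) := by
        intro x hx
        rw [← keyid (ψ G) (maps' G hG) x hx, right G hG]
      rw [hval a ha, hval c hc] at h
      have hfc : ψ G a = ψ G c :=
        hinjθ _ ((maps' G hG).2 ⟨a, rfl⟩) _ ((maps' G hG).2 ⟨c, rfl⟩) h
      have hfb : ψ G b = ψ G a := by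
        have m1 : ψ G a ≤ ψ G b := (maps' G hG).1 hab.le
        have m2 : ψ G b ≤ ψ G c := (maps' G hG).1 hbc.le
        exact le_antisymm (hfc ▸ m2) m1
      rw [hval b hb, hval a ha, hfb]
    have hne1 : θ a ≠ θ b := fun h => absurd (hinjθ a ha b hb h ▸ hab) (lt_irrefl _)
    have hne2 : θ b ≠ θ c := fun h => absurd (hinjθ b hb c hc h ▸ hbc) (lt_irrefl _)
    have claim1 : ¬ (θ b < θ a ∧ θ b < θ c) := by
      rintro ⟨h1, h2⟩
      have hG : mk2 {t : Y | t ≤ θ b} w1 w2 ∈ OPR Y' :=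
        mk2_mem (fun s t hts ht => le_trans hts ht) hw1 hw2 hw12.le
      have := ybtw _ hG (by
        rw [mk2_of_notMem (show θ a ∉ {t : Y | t ≤ θ b} from not_le.2 h1),
          mk2_of_notMem (show θ c ∉ {t : Y | t ≤ θ b} from not_le.2 h2)])
      rw [mk2_of_mem (show θ b ∈ {t : Y | t ≤ θ b} from le_refl _),
        mk2_of_notMem (show θ a ∉ {t : Y | t ≤ θ b} from not_le.2 h1)] at this
      exact absurd (this ▸ hw12) (lt_irrefl _)
    have claim2 : ¬ (θ a < θ b ∧ θ c < θ b) := by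
      rintro ⟨h1, h2⟩
      have hG : mk2 {t : Y | t < θ b} w1 w2 ∈ OPR Y' :=
        mk2_mem (fun s t hts ht => lt_of_le_of_lt hts ht) hw1 hw2 hw12.le
      have := ybtw _ hG (by
        rw [mk2_of_mem (show θ a ∈ {t : Y | t < θ b} from h1),
          mk2_of_mem (show θ c ∈ {t : Y | t < θ b} from h2)])
      rw [mk2_of_notMem (show θ b ∉ {t : Y | t < θ b} from lt_irrefl _),
        mk2_of_mem (show θ a ∈ {t : Y | t < θ b} from h1)] at this
      exact absurd (this ▸ hw12) (lt_irrefl _)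
    rcases lt_or_gt_of_ne hne1 with hx1 | hx1 <;> rcases lt_or_gt_of_ne hne2 with hx2 | hx2
    · exact Or.inl ⟨hx1, hx2⟩
    · exact absurd ⟨hx1, hx2⟩ claim2
    · exact absurd ⟨hx1, hx2⟩ claim1
    · exact Or.inr ⟨hx2, hx1⟩
  rcases mono_or_anti hinjθ hbtw with hmono | hanti
  · -- monotone case
    have hρmono : ∀ a ∈ Y', ∀ b ∈ Y', a ≤ b → ρ a ≤ ρ b := by
      intro a ha b hb hab
      by_contra hc
      have h1 : ρ b < ρ a := not_le.1 hc
      have h2 : θ (ρ b) ≤ θ (ρ a) := hmono _ (hρmem b hb) _ (hρmem a ha) h1.le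
      rw [hθρ a ha, hθρ b hb] at h2
      have : a = b := le_antisymm hab h2
      rw [this] at h1
      exact lt_irrefl _ h1
    have hq12 : θ p1 < θ p2 := lt_of_le_of_ne (hmono _ hp1 _ hp2 h12.le)
      (fun h => absurd (hinjθ _ hp1 _ hp2 h ▸ h12) (lt_irrefl _))
    have hq23 : θ p2 < θ p3 := lt_of_le_of_ne (hmono _ hp2 _ hp3 h23.le)
      (fun h => absurd (hinjθ _ hp2 _ hp3 h ▸ h23) (lt_irrefl _))
    set σ : Setup X Y X' Y' :=
      { φ := φ, ψ := ψ, θ := θ, ρ := ρ,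
        p1 := p1, p2 := p2, p3 := p3, hp1 := hp1, hp2 := hp2, hp3 := hp3,
        h12 := h12, h23 := h23,
        q1 := θ p1, q2 := θ p2, q3 := θ p3,
        hq1 := hθmem p1 hp1, hq2 := hθmem p2 hp2, hq3 := hθmem p3 hp3,
        hq12 := hq12, hq23 := hq23,
        maps := maps, maps' := maps', left := left, right := right,
        mult := hmult, mult' := mult',
        θmem := hθmem, ρmem := hρmem, ρθ := hρθ, θρ := hθρ,
        θmono := hmono, ρmono := hρmono, keyid := keyid, keyid' := keyid' }
    obtain ⟨θf, hiff, himg⟩ := σ.main_iso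
    exact ⟨θf, Or.inl hiff, himg⟩
  · -- antitone case: use the dual order on Y
    have hOPR : OPR (X := Yᵒᵈ) (Y' : Set Yᵒᵈ) = (OPR Y' : Set (Y → Y)) := opr_dual Y'
    have hρanti : ∀ a ∈ Y', ∀ b ∈ Y', b ≤ a → ρ a ≤ ρ b := by
      intro a ha b hb hab
      by_contra hc
      have h1 : ρ b < ρ a := not_le.1 hc
      have h2 : θ (ρ a) ≤ θ (ρ b) := hanti _ (hρmem b hb) _ (hρmem a ha) h1.le
      rw [hθρ a ha, hθρ b hb] at h2
      have : a = b := le_antisymm h2 hab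
      rw [this] at h1
      exact lt_irrefl _ h1
    have hq12 : θ p2 < θ p1 := lt_of_le_of_ne (hanti _ hp1 _ hp2 h12.le)
      (fun h => absurd (hinjθ _ hp2 _ hp1 h ▸ h12) (lt_irrefl _))
    have hq23 : θ p3 < θ p2 := lt_of_le_of_ne (hanti _ hp2 _ hp3 h23.le)
      (fun h => absurd (hinjθ _ hp3 _ hp2 h ▸ h23) (lt_irrefl _))
    set σ : Setup X Yᵒᵈ X' (Y' : Set Yᵒᵈ) :=
      { φ := φ, ψ := ψ, θ := θ, ρ := ρ,
        p1 := p1, p2 := p2, p3 := p3, hp1 := hp1, hp2 := hp2, hp3 := hp3,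
        h12 := h12, h23 := h23,
        q1 := θ p1, q2 := θ p2, q3 := θ p3,
        hq1 := hθmem p1 hp1, hq2 := hθmem p2 hp2, hq3 := hθmem p3 hp3,
        hq12 := hq12, hq23 := hq23,
        maps := fun f hf => hOPR.symm ▸ maps f hf,
        maps' := fun g hg => maps' g (hOPR ▸ hg),
        left := left,
        right := fun g hg => right g (hOPR ▸ hg),
        mult := hmult,
        mult' := fun F hF G hG => mult' F (hOPR ▸ hF) G (hOPR ▸ hG),
        θmem := hθmem, ρmem := hρmem, ρθ := hρθ, θρ := hθρ,
        θmono := fun a ha b hb hab => hanti a ha b hb hab,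
        ρmono := fun a ha b hb hab => hρanti a ha b hb hab,
        keyid := keyid,
        keyid' := fun g hg b hb => keyid' g (hOPR ▸ hg) b hb }
    obtain ⟨θf, hiff, himg⟩ := σ.main_iso
    refine ⟨θf.trans OrderDual.ofDual, Or.inr fun a b => hiff a b, ?_⟩
    exact himg

end MainSec
/-- main theorem: for `|X'| ≥ 3` and `|Y'| ≥ 3`,
`T_OP(X, X') ≅ T_OP(Y, Y')` iff there is an order-(anti)-isomorphism `θ : X → Y`
with `θ(X') = Y'`. -/
theorem stmt_19 {X Y : Type*} [LinearOrder X] [LinearOrder Y]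
    (X' : Set X) (Y' : Set Y)
    (h3X : 3 ≤ Cardinal.mk ↥X') (h3Y : 3 ≤ Cardinal.mk ↥Y') :
    (∃ φ : (X → X) → (Y → Y), IsSgIso X' Y' φ) ↔
    ∃ θ : X ≃ Y,
      ((∀ a b : X, a ≤ b ↔ θ a ≤ θ b) ∨ (∀ a b : X, a ≤ b ↔ θ b ≤ θ a)) ∧
      θ '' X' = Y' := by
  constructor
  · rintro ⟨φ, hφ⟩
    exact forward X' Y' h3X h3Y φ hφ
  · rintro ⟨θ, hmono, himg⟩
    exact ⟨fun f => θ ∘ f ∘ θ.symm, easy_direction θ hmono himg⟩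
end
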